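/- Closedness of the Young-measure constraint set (step 2 of Lemma 5.5): let v_1,…,v_N : ℝ^d → S^{d-1} be continuous, K > 0, and suppose (σ^n, ν_t^n ⊗ λ) are pairs with σ^n : [0,1] → ℝ^d K-Lipschitz, ν_t^n probability measures supported in the closed ball B_{K'} (K' > 0 fixed), satisfying σ̇^n(t) = ∫_{ℝ^d} v dν_t^n(v) for a.e. t and supp ν_t^n ⊂ ∪_k ℝ_+ v_k(σ^n(t)) for a.e. t. If σ^n → σ uniformly and ν_t^n ⊗ λ → ν_t ⊗ λ narrowly, then the limit satisfies the same two conditions: σ̇(t) = ∫ v dν_t(v) a.e. and supp ν_t ⊂ ∪_k ℝ_+ v_k(σ(t)) for a.e. t. -/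

import Mathlib

open MeasureTheory Filter Topology Set

private lemma aux_slope {E : Type*} [NormedAddCommGroup E] [NormedSpace ℝ E]
    {f : ℝ → E} {y : E} {u : ℝ} (hd : HasDerivAt f y u) :
    Tendsto (fun j : ℕ => (j : ℝ) • (f (u + 1 / j) - f u)) atTop (𝓝 y) := by
  have h0 : Tendsto (fun j : ℕ => u + 1 / (j : ℝ)) atTop (𝓝[≠] u) := by
    refine tendsto_nhdsWithin_iff.2 ⟨?_, ?_⟩
    · have := tendsto_one_div_atTop_nhds_zero_nat.const_add u
      simpa using this
    · filter_upwards [eventually_ge_atTop 1] with j hj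
      have : (0:ℝ) < 1 / (j:ℝ) := by positivity
      simp only [mem_compl_iff, mem_singleton_iff]
      intro h; nlinarith [h]
  have h1 := (hasDerivAt_iff_tendsto_slope.1 hd).comp h0
  refine h1.congr' ?_
  filter_upwards [eventually_ge_atTop 1] with j hj
  have hj0 : (j:ℝ) ≠ 0 := by positivity
  have : slope f u (u + 1 / j) = (1 / (j:ℝ))⁻¹ • (f (u + 1 / j) - f u) := by
    rw [slope_def_module]; ring_nf
  rw [Function.comp_apply, this]
  rw [one_div, inv_inv]

private lemma aux_ftc {E : Type*} [NormedAddCommGroup E] [NormedSpace ℝ E] [CompleteSpace E]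
    {f g : ℝ → E} {C : ℝ} (hC : 0 ≤ C)
    (hf : ∀ x y, ‖f x - f y‖ ≤ C * |x - y|) {a b : ℝ} (hab : a ≤ b)
    (hg : ∀ᵐ u ∂(volume.restrict (Set.Ioo a b)), HasDerivAt f (g u) u) :
    ∫ u in a..b, g u = f b - f a := by
  have hfc : Continuous f := by
    rw [Metric.continuous_iff]
    intro x ε hε
    rcases eq_or_lt_of_le hC with h0 | hCpos
    · exact ⟨1, one_pos, fun y _ => by
        have := hf y x; rw [← h0, zero_mul] at this
        have : f y = f x := by
          have := norm_sub_eq_zero_iff.1 (le_antisymm this (norm_nonneg _))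
          exact this
        simpa [dist_eq_norm, this] using hε⟩
    · refine ⟨ε / C, by positivity, fun y hy => ?_⟩
      rw [dist_eq_norm]
      calc ‖f y - f x‖ ≤ C * |y - x| := hf y x
        _ < C * (ε / C) := by
            apply mul_lt_mul_of_pos_left _ hCpos
            rw [dist_eq_norm, Real.norm_eq_abs] at hy; exact hy
        _ = ε := by field_simp
  set G : ℕ → ℝ → E := fun j u => (j : ℝ) • (f (u + 1 / j) - f u) with hG
  have hGcont : ∀ j, Continuous (G j) := fun j => by
    apply Continuous.smul continuous_const
    exact ((hfc.comp (continuous_id.add continuous_const)).sub hfc)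
  have hg' : ∀ᵐ u ∂(volume.restrict (Set.Ioc a b)), HasDerivAt f (g u) u := by
    rwa [Measure.restrict_congr_set Ioo_ae_eq_Ioc] at hg
  have hDCT := MeasureTheory.tendsto_integral_of_dominated_convergence
    (μ := volume.restrict (Set.Ioc a b)) (F := G) (f := g) (fun _ => C)
    (fun j => (hGcont j).aestronglyMeasurable)
    (integrableOn_const measure_Ioc_lt_top.ne)
    (fun j => by
      filter_upwards with u
      rcases Nat.eq_zero_or_pos j with hj | hj
      · simp [hG, hj, hC]
      · have hj0 : (0:ℝ) < (j:ℝ) := by exact_mod_cast hj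
        have : ‖G j u‖ = (j:ℝ) * ‖f (u + 1/j) - f u‖ := by
          rw [hG]; simp [norm_smul, abs_of_nonneg hj0.le]
        rw [this]
        calc (j:ℝ) * ‖f (u + 1/j) - f u‖ ≤ (j:ℝ) * (C * |u + 1/j - u|) := by
              apply mul_le_mul_of_nonneg_left (hf _ _) hj0.le
          _ = C := by
              have : |u + 1/(j:ℝ) - u| = 1/(j:ℝ) := by
                rw [add_sub_cancel_left, abs_of_pos (by positivity)]
              rw [this]; field_simp
        )
    (by filter_upwards [hg'] with u hu using aux_slope hu)
  -- compute the integrals of G j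
  have hfint : ∀ c d : ℝ, IntervalIntegrable f volume c d := fun c d =>
    hfc.intervalIntegrable c d
  have hcalc : ∀ j : ℕ, 1 ≤ j → ∫ u in Set.Ioc a b, G j u =
      (j:ℝ) • ((∫ u in b..(b + 1/j), f u) - ∫ u in a..(a + 1/j), f u) := by
    intro j hj
    rw [← intervalIntegral.integral_of_le hab]
    have h1 : ∫ u in a..b, G j u
        = (j:ℝ) • ((∫ u in a..b, f (u + 1/j)) - ∫ u in a..b, f u) := by
      rw [hG]
      rw [intervalIntegral.integral_smul]
      congr 1
      apply intervalIntegral.integral_sub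
      · exact (hfc.comp (continuous_id.add continuous_const)).intervalIntegrable a b
      · exact hfint a b
    rw [h1, intervalIntegral.integral_comp_add_right f (1/j)]
    congr 1
    have e1 : (∫ u in (a + 1/(j:ℝ))..(b + 1/j), f u)
        = (∫ u in (a + 1/(j:ℝ))..a, f u) + ((∫ u in a..b, f u) + ∫ u in b..(b + 1/j), f u) := by
      rw [intervalIntegral.integral_add_adjacent_intervals (hfint _ _) (hfint _ _),
        intervalIntegral.integral_add_adjacent_intervals (hfint _ _) (hfint _ _)]
    rw [e1]
    have e2 : (∫ u in (a + 1/(j:ℝ))..a, f u) = - ∫ u in a..(a + 1/(j:ℝ)), f u :=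
      intervalIntegral.integral_symm a (a + 1/j)
    rw [e2]; abel
  have hFb : Tendsto (fun j : ℕ => (j:ℝ) • (∫ u in b..(b + 1/j), f u)) atTop (𝓝 (f b)) := by
    have hD : HasDerivAt (fun x => ∫ u in b..x, f u) (f b) b :=
      intervalIntegral.integral_hasDerivAt_right (hfint b b)
        (hfc.stronglyMeasurableAtFilter _ _) hfc.continuousAt
    have := aux_slope hD
    simpa using this
  have hFa : Tendsto (fun j : ℕ => (j:ℝ) • (∫ u in a..(a + 1/j), f u)) atTop (𝓝 (f a)) := by
    have hD : HasDerivAt (fun x => ∫ u in a..x, f u) (f a) a :=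
      intervalIntegral.integral_hasDerivAt_right (hfint a a)
        (hfc.stronglyMeasurableAtFilter _ _) hfc.continuousAt
    have := aux_slope hD
    simpa using this
  have hlim2 : Tendsto (fun j : ℕ => ∫ u in Set.Ioc a b, G j u) atTop (𝓝 (f b - f a)) := by
    apply Tendsto.congr' _ (hFb.sub hFa)
    filter_upwards [eventually_ge_atTop 1] with j hj
    rw [hcalc j hj, smul_sub]
  have := tendsto_nhds_unique hDCT hlim2
  rw [intervalIntegral.integral_of_le hab, this]

noncomputable def tent (t : ℝ) (j : ℕ) (u : ℝ) : ℝ :=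
  max 0 (1 - j * Metric.infDist u (Set.Icc 0 t))

lemma tent_cont (t : ℝ) (j : ℕ) : Continuous (tent t j) := by
  unfold tent
  exact continuous_const.max
    (continuous_const.sub (continuous_const.mul (Metric.continuous_infDist_pt _)))

lemma tent_nonneg (t : ℝ) (j : ℕ) (u : ℝ) : 0 ≤ tent t j u := le_max_left _ _

lemma tent_le_one (t : ℝ) (j : ℕ) (u : ℝ) : tent t j u ≤ 1 := by
  unfold tent
  apply max_le (by norm_num)
  have h1 : (0:ℝ) ≤ j * Metric.infDist u (Set.Icc 0 t) :=
    mul_nonneg (Nat.cast_nonneg j) Metric.infDist_nonneg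
  linarith [Metric.infDist_nonneg (x := u) (s := Set.Icc (0:ℝ) t)]

lemma tent_eq_one {t : ℝ} (j : ℕ) {u : ℝ} (hu : u ∈ Set.Icc 0 t) : tent t j u = 1 := by
  unfold tent
  rw [Metric.infDist_zero_of_mem hu]
  simp

lemma tent_eq_zero {t : ℝ} {j : ℕ} {u : ℝ} (ht : 0 ≤ t) (hj : 1 ≤ j)
    (hu : t + 1 / j ≤ u) : tent t j u = 0 := by
  have hj0 : (0:ℝ) < (j:ℝ) := by exact_mod_cast hj
  have hlow : t + 1/(j:ℝ) ≤ t + 1/1 := by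
    gcongr; exact_mod_cast hj
  have hinf : u - t ≤ Metric.infDist u (Set.Icc 0 t) := by
    by_contra h
    push_neg at h
    obtain ⟨y, hy, hdy⟩ := (Metric.infDist_lt_iff ⟨0, by simp [ht]⟩).1 h
    have : u - t ≤ dist u y := by
      rw [Real.dist_eq]
      have := hy.2
      have h2 : u - y ≤ |u - y| := le_abs_self _
      linarith
    linarith
  unfold tent
  apply max_eq_left
  have h1 : (1:ℝ) ≤ (j:ℝ) * (u - t) := by
    have : 1/(j:ℝ) ≤ u - t := by linarith
    calc (1:ℝ) = (j:ℝ) * (1/(j:ℝ)) := by field_simp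
      _ ≤ (j:ℝ) * (u - t) := by gcongr
  have h2 : (j:ℝ) * (u - t) ≤ (j:ℝ) * Metric.infDist u (Set.Icc 0 t) := by gcongr
  linarith

lemma aux_tent_bound {h : ℝ → ℝ} {C : ℝ} (hC : 0 ≤ C)
    (hint : IntegrableOn h (Set.Ioc 0 1))
    (hbd : ∀ u ∈ Set.Ioc (0:ℝ) 1, |h u| ≤ C) {t : ℝ} (ht : t ∈ Set.Icc (0:ℝ) 1)
    {j : ℕ} (hj : 1 ≤ j) :
    |(∫ u in Set.Ioc (0:ℝ) 1, tent t j u * h u) - ∫ u in Set.Ioc (0:ℝ) t, h u| ≤ C / j := by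
  have hj0 : (0:ℝ) < (j:ℝ) := by exact_mod_cast hj
  have hsub : Set.Ioc (0:ℝ) t ⊆ Set.Ioc (0:ℝ) 1 := Set.Ioc_subset_Ioc_right ht.2
  have hintt : IntegrableOn h (Set.Ioc 0 t) := hint.mono_set hsub
  have h2 : (∫ u in Set.Ioc (0:ℝ) t, h u)
      = ∫ u in Set.Ioc (0:ℝ) 1, (Set.Ioc (0:ℝ) t).indicator h u := by
    rw [MeasureTheory.setIntegral_indicator measurableSet_Ioc,
      Set.inter_eq_self_of_subset_right hsub]
  rw [h2]
  have hint1 : IntegrableOn (fun u => tent t j u * h u) (Set.Ioc 0 1) := by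
    apply hint.bdd_mul (c := 1) ((tent_cont t j).aestronglyMeasurable)
    exact Filter.Eventually.of_forall (fun u => by
      rw [Real.norm_eq_abs, abs_of_nonneg (tent_nonneg _ _ _)]; exact tent_le_one _ _ _)
  have hint2 : IntegrableOn ((Set.Ioc (0:ℝ) t).indicator h) (Set.Ioc 0 1) :=
    (hintt.integrable_indicator measurableSet_Ioc).integrableOn
  rw [← MeasureTheory.integral_sub hint1 hint2]
  have hboundfun : Integrable ((Set.Ioc t (t + 1/(j:ℝ))).indicator (fun _ => C))
      (volume.restrict (Set.Ioc (0:ℝ) 1)) := by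
    have hc : IntegrableOn (fun _ : ℝ => C) (Set.Ioc (0:ℝ) 1) volume :=
      integrableOn_const measure_Ioc_lt_top.ne
    exact hc.indicator measurableSet_Ioc
  calc ‖∫ u in Set.Ioc (0:ℝ) 1, (tent t j u * h u - (Set.Ioc (0:ℝ) t).indicator h u)‖
      ≤ ∫ u in Set.Ioc (0:ℝ) 1, (Set.Ioc t (t + 1/(j:ℝ))).indicator (fun _ => C) u := by
        apply MeasureTheory.norm_integral_le_of_norm_le hboundfun
        rw [MeasureTheory.ae_restrict_iff' measurableSet_Ioc]
        filter_upwards with u hu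
        rcases le_or_gt u t with hut | hut
        · have humem : u ∈ Set.Ioc (0:ℝ) t := Set.mem_Ioc.2 ⟨hu.1, hut⟩
          rw [Set.indicator_of_mem humem,
            tent_eq_one j ⟨hu.1.le, hut⟩, one_mul, sub_self]
          simp only [norm_zero]
          apply Set.indicator_apply_nonneg (fun _ => hC)
        · rw [Set.indicator_of_notMem (fun hmem => absurd hmem.2 (not_le.2 hut)), sub_zero]
          rcases le_or_gt u (t + 1/(j:ℝ)) with hu2 | hu2
          · rw [Set.indicator_of_mem (Set.mem_Ioc.2 ⟨hut, hu2⟩)]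
            rw [Real.norm_eq_abs, abs_mul, abs_of_nonneg (tent_nonneg _ _ _)]
            calc tent t j u * |h u| ≤ 1 * C := by
                  apply mul_le_mul (tent_le_one _ _ _) (hbd u hu) (abs_nonneg _) zero_le_one
              _ = C := one_mul C
          · rw [tent_eq_zero (le_trans (le_refl _) ht.1) hj hu2.le, zero_mul]
            simp only [norm_zero]
            apply Set.indicator_apply_nonneg (fun _ => hC)
    _ ≤ C / j := by
        rw [MeasureTheory.integral_indicator_const _ measurableSet_Ioc]
        rw [measureReal_def, Measure.restrict_apply measurableSet_Ioc]
        have hmono : volume (Set.Ioc t (t + 1/(j:ℝ)) ∩ Set.Ioc 0 1)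
            ≤ volume (Set.Ioc t (t + 1/(j:ℝ))) := measure_mono Set.inter_subset_left
        rw [Real.volume_Ioc] at hmono
        have htoReal : (volume (Set.Ioc t (t + 1/(j:ℝ)) ∩ Set.Ioc 0 1)).toReal ≤ 1/(j:ℝ) := by
          have := ENNReal.toReal_mono (by simp) hmono
          rw [ENNReal.toReal_ofReal (by rw [add_sub_cancel_left]; positivity)] at this
          simpa using this
        have := mul_le_mul_of_nonneg_left htoReal hC
        calc (volume (Set.Ioc t (t + 1/(j:ℝ)) ∩ Set.Ioc 0 1)).toReal • C
            = C * (volume (Set.Ioc t (t + 1/(j:ℝ)) ∩ Set.Ioc 0 1)).toReal := by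
              rw [smul_eq_mul, mul_comm]
          _ ≤ C * (1/(j:ℝ)) := this
          _ = C / j := by field_simp

lemma aux_pos_integral {g : ℝ → ℝ} (hgc : Continuous g) (hg0 : ∀ u, 0 ≤ g u)
    {u₀ : ℝ} (hu₀ : u₀ ∈ Set.Ioo (0:ℝ) 1) (hpos : 0 < g u₀)
    (hint : IntegrableOn g (Set.Ioc 0 1)) :
    0 < ∫ u in Set.Ioc (0:ℝ) 1, g u := by
  rw [MeasureTheory.setIntegral_pos_iff_support_of_nonneg_ae
    (Filter.Eventually.of_forall (fun u => hg0 u)) hint]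
  have hopen : IsOpen ({u | 0 < g u} ∩ Set.Ioo 0 1) :=
    (isOpen_lt continuous_const hgc).inter isOpen_Ioo
  have hmem : u₀ ∈ ({u | 0 < g u} ∩ Set.Ioo 0 1) := ⟨hpos, hu₀⟩
  have hsubset : ({u | 0 < g u} ∩ Set.Ioo 0 1) ⊆ Function.support g ∩ Set.Ioc 0 1 := by
    rintro u ⟨h1, h2⟩
    exact ⟨ne_of_gt h1, Set.Ioo_subset_Ioc_self h2⟩
  calc (0:ENNReal) < volume ({u | 0 < g u} ∩ Set.Ioo 0 1) :=
        hopen.measure_pos volume ⟨u₀, hmem⟩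
    _ ≤ volume (Function.support g ∩ Set.Ioc 0 1) := measure_mono hsubset

lemma aux_junk {a : ℕ → ℝ} {ψ g : ℝ → ℝ}
    (hψint : IntervalIntegrable ψ volume 0 1)
    (hP : 0 < ∫ u in (0:ℝ)..1, ψ u)
    (h0 : Tendsto a atTop (𝓝 (∫ u in (0:ℝ)..1, ψ u * g u)))
    (h1 : Tendsto (fun n => a n + ∫ u in (0:ℝ)..1, ψ u) atTop
      (𝓝 (∫ u in (0:ℝ)..1, (ψ u * g u + ψ u)))) :
    IntervalIntegrable (fun u => ψ u * g u) volume 0 1 := by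
  by_contra hni
  have h2 : ¬ IntervalIntegrable (fun u => ψ u * g u + ψ u) volume 0 1 := by
    intro hsum
    exact hni (by simpa using hsum.sub hψint)
  rw [intervalIntegral.integral_undef hni] at h0
  rw [intervalIntegral.integral_undef h2] at h1
  have h3 : Tendsto (fun n => a n + ∫ u in (0:ℝ)..1, ψ u) atTop
      (𝓝 (0 + ∫ u in (0:ℝ)..1, ψ u)) := h0.add_const _
  have := tendsto_nhds_unique h1 h3
  linarith

lemma aux_Ioc_to_Icc {P : ℝ → Prop}
    (h : ∀ᵐ u ∂(volume.restrict (Set.Ioc (0:ℝ) 1)), P u) :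
    ∀ᵐ u ∂(volume.restrict (Set.Icc (0:ℝ) 1)), P u := by
  rw [ae_iff, Measure.restrict_apply' measurableSet_Ioc] at h
  rw [ae_iff, Measure.restrict_apply' measurableSet_Icc]
  refine measure_mono_null (t := ({u | ¬ P u} ∩ Set.Ioc 0 1) ∪ {(0:ℝ)}) ?_ ?_
  · rintro u ⟨hu1, hu2⟩
    rcases eq_or_lt_of_le hu2.1 with h0 | h0
    · right; exact h0.symm ▸ rfl
    · left; exact ⟨hu1, h0, hu2.2⟩
  · rw [measure_union_null_iff]
    exact ⟨h, measure_singleton 0⟩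

lemma aux_ray_eq {E : Type*} [NormedAddCommGroup E] [InnerProductSpace ℝ E] {u : E}
    (hu : ‖u‖ = 1) : {w : E | ∃ s : ℝ, 0 ≤ s ∧ w = s • u} =
      (fun w : E => ‖w‖^2 - (max (inner ℝ w u : ℝ) 0)^2) ⁻¹' {0} := by
  ext w
  simp only [Set.mem_setOf_eq, Set.mem_preimage, Set.mem_singleton_iff]
  constructor
  · rintro ⟨s, hs, rfl⟩
    have h1 : (inner ℝ (s • u) u : ℝ) = s := by
      rw [real_inner_smul_left, real_inner_self_eq_norm_sq, hu]
      ring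
    rw [h1, max_eq_left_iff.2 hs, norm_smul, hu, Real.norm_eq_abs, abs_of_nonneg hs]
    ring
  · intro h
    set s : ℝ := max (inner ℝ w u : ℝ) 0 with hs
    have hs0 : 0 ≤ s := le_max_right _ _
    refine ⟨s, hs0, ?_⟩
    have hw2 : ‖w‖^2 = s^2 := by linarith
    rcases le_or_gt 0 (inner ℝ w u : ℝ) with hwu | hwu
    · have hseq : s = (inner ℝ w u : ℝ) := max_eq_left hwu
      have hexp : ‖w - s • u‖^2 = ‖w‖^2 - 2 * (inner ℝ w (s • u) : ℝ) + ‖s • u‖^2 :=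
        norm_sub_sq_real w (s • u)
      have h2 : (inner ℝ w (s • u) : ℝ) = s * (inner ℝ w u : ℝ) := real_inner_smul_right w u s
      have h3 : ‖s • u‖^2 = s^2 := by
        rw [norm_smul, hu, Real.norm_eq_abs, abs_of_nonneg hs0]; ring
      have h4 : ‖w - s • u‖^2 = 0 := by
        rw [hexp, h2, h3, hw2, ← hseq]; ring
      have h5 : w - s • u = 0 := by
        have := pow_eq_zero_iff (n := 2) (by norm_num) |>.1 h4
        exact norm_eq_zero.1 this
      exact (sub_eq_zero.1 h5)
    · have hseq : s = 0 := max_eq_right hwu.le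
      have : ‖w‖^2 = 0 := by rw [hw2, hseq]; ring
      have hw0 : w = 0 := norm_eq_zero.1 (pow_eq_zero_iff (n := 2) (by norm_num) |>.1 this)
      rw [hw0, hseq, zero_smul]

lemma aux_ray_closed {E : Type*} [NormedAddCommGroup E] [InnerProductSpace ℝ E] {u : E}
    (hu : ‖u‖ = 1) : IsClosed {w : E | ∃ s : ℝ, 0 ≤ s ∧ w = s • u} := by
  rw [aux_ray_eq hu]
  apply IsClosed.preimage _ isClosed_singleton
  apply Continuous.sub
  · exact (continuous_norm).pow 2
  · apply Continuous.pow
    apply Continuous.max _ continuous_const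
    exact Continuous.inner continuous_id continuous_const

lemma aux_deriv_point {E : Type*} [NormedAddCommGroup E] [NormedSpace ℝ E] [CompleteSpace E]
    {B : ℝ → E} (hBint : Integrable B volume) {t : ℝ}
    (hL : Tendsto (fun r => ⨍ y in Metric.closedBall t r, ‖B y - B t‖) (𝓝[>] 0) (𝓝 0)) :
    HasDerivAt (fun r => ∫ u in (0:ℝ)..r, B u) (B t) t := by
  rw [hasDerivAt_iff_isLittleO]
  rw [Asymptotics.isLittleO_iff]
  intro c hc
  have h2 : ∀ᶠ ρ in 𝓝[>] (0:ℝ), (⨍ y in Metric.closedBall t ρ, ‖B y - B t‖) < c/2 :=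
    hL.eventually_lt_const (by positivity)
  rw [eventually_nhdsWithin_iff] at h2
  rw [Metric.eventually_nhds_iff] at h2
  obtain ⟨δ, hδ, hδ2⟩ := h2
  rw [Metric.eventually_nhds_iff]
  refine ⟨δ, hδ, fun {r} hr => ?_⟩
  rcases eq_or_ne r t with rfl | hrt
  · simp
  · set ρ := |r - t| with hρ
    have hρ0 : 0 < ρ := abs_pos.2 (sub_ne_zero.2 hrt)
    have hρδ : ρ < δ := by
      rw [hρ]; rw [Real.dist_eq] at hr; exact hr
    have havg : (⨍ y in Metric.closedBall t ρ, ‖B y - B t‖) < c/2 := by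
      apply hδ2 _ (Set.mem_Ioi.2 hρ0)
      rw [Real.dist_eq, sub_zero, abs_of_pos hρ0]; exact hρδ
    have hIIany : ∀ a b : ℝ, IntervalIntegrable B volume a b := fun a b =>
      hBint.intervalIntegrable
    have e1 : (∫ u in (0:ℝ)..r, B u) - ∫ u in (0:ℝ)..t, B u = ∫ u in t..r, B u :=
      intervalIntegral.integral_interval_sub_left (hIIany 0 r) (hIIany 0 t)
    have e2 : (r - t) • B t = ∫ _ in t..r, B t := by
      rw [intervalIntegral.integral_const]
    have e3 : (∫ u in (0:ℝ)..r, B u) - (∫ u in (0:ℝ)..t, B u) - (r - t) • B t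
        = ∫ u in t..r, (B u - B t) := by
      rw [e1, e2, ← intervalIntegral.integral_sub (hIIany t r) intervalIntegrable_const]
    rw [e3]
    have hsub : Set.uIoc t r ⊆ Metric.closedBall t ρ := by
      intro x hx
      rw [Metric.mem_closedBall, Real.dist_eq]
      rcases le_total t r with h | h
      · rw [Set.uIoc_of_le h] at hx
        rw [abs_of_nonneg (by linarith [hx.1.le])]
        have : r - t ≤ ρ := le_abs_self _
        linarith [hx.2]
      · rw [Set.uIoc_of_ge h] at hx
        rw [abs_of_nonpos (by linarith [hx.2])]
        have : -(r - t) ≤ ρ := neg_le_abs _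
        linarith [hx.1]
    have hnormint : IntegrableOn (fun u => ‖B u - B t‖) (Metric.closedBall t ρ) volume :=
      ((hBint.integrableOn.sub (integrableOn_const
        measure_closedBall_lt_top.ne)).norm)
    calc ‖∫ u in t..r, (B u - B t)‖
        ≤ ∫ u in Set.uIoc t r, ‖B u - B t‖ :=
          intervalIntegral.norm_integral_le_integral_norm_uIoc
      _ ≤ ∫ u in Metric.closedBall t ρ, ‖B u - B t‖ := by
          apply MeasureTheory.setIntegral_mono_set hnormint
          · exact Filter.Eventually.of_forall (fun u => norm_nonneg _)
          · exact HasSubset.Subset.eventuallyLE hsub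
      _ = (volume (Metric.closedBall t ρ)).toReal • ⨍ y in Metric.closedBall t ρ, ‖B y - B t‖ := by
          rw [MeasureTheory.setAverage_eq, smul_smul, measureReal_def]
          rw [mul_inv_cancel₀, one_smul]
          rw [Real.volume_closedBall]
          simp only [ne_eq, ENNReal.toReal_eq_zero_iff]
          push_neg
          constructor
          · exact ne_of_gt (ENNReal.ofReal_pos.2 (by linarith))
          · exact ENNReal.ofReal_ne_top
      _ ≤ (2 * ρ) * (c/2) := by
          rw [Real.volume_closedBall, ENNReal.toReal_ofReal (by linarith), smul_eq_mul]
          apply mul_le_mul_of_nonneg_left havg.le (by linarith)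
      _ = c * ρ := by ring
      _ = c * ‖r - t‖ := by rw [hρ, Real.norm_eq_abs]

lemma aux_int_shift {α : Type*} [MeasurableSpace α] (μ : Measure α) [IsProbabilityMeasure μ]
    {g : α → ℝ} (hg : Integrable g μ) (c : ℝ) :
    ∫ w, (g w + c) ∂μ = (∫ w, g w ∂μ) + c := by
  rw [MeasureTheory.integral_add hg (integrable_const c), MeasureTheory.integral_const]
  simp

lemma aux_int_bdd {α : Type*} [MeasurableSpace α] [TopologicalSpace α] [OpensMeasurableSpace α]
    (μ : Measure α) [IsProbabilityMeasure μ] {g : α → ℝ} (hgc : Continuous g) {C : ℝ}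
    (hC : ∀ x, |g x| ≤ C) : Integrable g μ := by
  apply MeasureTheory.Integrable.mono' (integrable_const C) hgc.aestronglyMeasurable
  filter_upwards with x
  rw [Real.norm_eq_abs]; exact hC x

lemma aux_zero_ae {α : Type*} [MeasurableSpace α] [TopologicalSpace α] [OpensMeasurableSpace α]
    (μ : Measure α) [IsProbabilityMeasure μ] {g : α → ℝ} (hgc : Continuous g)
    (hg0 : ∀ x, 0 ≤ g x) (hg1 : ∀ x, g x ≤ 1) (hint : ∫ w, g w ∂μ = 0) :
    μ {x | g x ≠ 0} = 0 := by
  have hgint : Integrable g μ := aux_int_bdd μ hgc (C := 1)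
    (fun x => by rw [abs_of_nonneg (hg0 x)]; exact hg1 x)
  have := (MeasureTheory.integral_eq_zero_iff_of_nonneg_ae
    (Filter.Eventually.of_forall hg0) hgint).1 hint
  rw [Filter.EventuallyEq, ae_iff] at this
  simpa using this

noncomputable def auxBCF {α : Type*} [TopologicalSpace α] (f : α → ℝ) (hf : Continuous f) (C : ℝ)
    (hC : ∀ x, |f x| ≤ C) : BoundedContinuousFunction α ℝ :=
  BoundedContinuousFunction.mkOfBound ⟨f, hf⟩ (2 * C) (fun x y => by
    have h1 : dist (f x) (f y) ≤ |f x| + |f y| := by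
      rw [Real.dist_eq, ← Real.norm_eq_abs (f x - f y), ← Real.norm_eq_abs (f x),
        ← Real.norm_eq_abs (f y)]
      exact norm_sub_le _ _
    have := hC x; have := hC y
    show dist (f x) (f y) ≤ 2 * C
    linarith)

@[simp] lemma auxBCF_apply {α : Type*} [TopologicalSpace α] (f : α → ℝ) (hf : Continuous f)
    (C : ℝ) (hC : ∀ x, |f x| ≤ C) (x : α) : auxBCF f hf C hC x = f x := rfl

set_option maxHeartbeats 2000000

/-- closedness of the Young-measure constraint set: uniform limits of
`K`-Lipschitz curves with velocities `σ̇ⁿ(t) = ∫ v dν_tⁿ` and Young measures supported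
on the rays `∪_k ℝ₊ v_k(σⁿ(t))` (and in a fixed ball) satisfy the same two conditions
in the limit, under uniform convergence of `σⁿ` and narrow convergence of
`ν_tⁿ ⊗ λ → ν_t ⊗ λ`. -/
theorem stmt_19 (d N : ℕ)
    (v : Fin N → EuclideanSpace ℝ (Fin d) → EuclideanSpace ℝ (Fin d))
    (hv_cont : ∀ k, Continuous (v k)) (hv_unit : ∀ k x, ‖v k x‖ = 1)
    (K K' : ℝ) (hK : 0 < K) (hK' : 0 < K')
    (σ : ℝ → EuclideanSpace ℝ (Fin d)) (σn : ℕ → ℝ → EuclideanSpace ℝ (Fin d))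
    (hσnLip : ∀ n, LipschitzOnWith (Real.toNNReal K) (σn n) (Set.Icc 0 1))
    (ν : ℝ → Measure (EuclideanSpace ℝ (Fin d)))
    (νn : ℕ → ℝ → Measure (EuclideanSpace ℝ (Fin d)))
    [∀ t, IsProbabilityMeasure (ν t)] [∀ n t, IsProbabilityMeasure (νn n t)]
    -- supports in the closed ball B_{K'}
    (hsupp : ∀ n, ∀ t ∈ Set.Icc (0:ℝ) 1,
      νn n t (Metric.closedBall (0 : EuclideanSpace ℝ (Fin d)) K')ᶜ = 0)
    -- velocity condition for σⁿ
    (hvel : ∀ n, ∀ᵐ t ∂(volume.restrict (Set.Icc (0:ℝ) 1)),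
      HasDerivAt (σn n) (∫ w, w ∂(νn n t)) t)
    -- supports in the union of the rays ℝ₊ v_k(σⁿ(t))
    (hray : ∀ n, ∀ᵐ t ∂(volume.restrict (Set.Icc (0:ℝ) 1)),
      νn n t {w : EuclideanSpace ℝ (Fin d) |
        ∃ k : Fin N, ∃ s : ℝ, 0 ≤ s ∧ w = s • v k (σn n t)}ᶜ = 0)
    -- uniform convergence of the curves
    (hσconv : TendstoUniformlyOn (fun n t => σn n t) σ atTop (Set.Icc 0 1))
    -- narrow convergence of ν_tⁿ ⊗ λ → ν_t ⊗ λ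
    (hnarrow : ∀ f : BoundedContinuousFunction (EuclideanSpace ℝ (Fin d) × ℝ) ℝ,
      Tendsto (fun n => ∫ t in (0:ℝ)..1, ∫ w, f (w, t) ∂(νn n t)) atTop
        (𝓝 (∫ t in (0:ℝ)..1, ∫ w, f (w, t) ∂(ν t)))) :
    (∀ᵐ t ∂(volume.restrict (Set.Icc (0:ℝ) 1)),
      HasDerivAt σ (∫ w, w ∂(ν t)) t) ∧
    (∀ᵐ t ∂(volume.restrict (Set.Icc (0:ℝ) 1)),
      ν t {w : EuclideanSpace ℝ (Fin d) |
        ∃ k : Fin N, ∃ s : ℝ, 0 ≤ s ∧ w = s • v k (σ t)}ᶜ = 0) := by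
  classical
  have hKnn : ((Real.toNNReal K : NNReal) : ℝ) = K := Real.coe_toNNReal K hK.le
  have h01 : (0:ℝ) ≤ 1 := zero_le_one
  have h0mem : (0:ℝ) ∈ Set.Icc (0:ℝ) 1 := ⟨le_refl 0, zero_le_one⟩
  -- clamp function
  set π : ℝ → ℝ := fun r => ((Set.projIcc (0:ℝ) 1 h01 r : Set.Icc (0:ℝ) 1) : ℝ) with hπ
  have hπmem : ∀ r, π r ∈ Set.Icc (0:ℝ) 1 := fun r => (Set.projIcc (0:ℝ) 1 h01 r).2
  have hπeq : ∀ r ∈ Set.Icc (0:ℝ) 1, π r = r := fun r hr => by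
    simp only [hπ]; rw [Set.projIcc_of_mem h01 hr]
  have hπlip : ∀ r s : ℝ, dist (π r) (π s) ≤ dist r s := fun r s => by
    have h := (LipschitzWith.projIcc (h01 : (0:ℝ) ≤ 1)).dist_le_mul r s
    rw [Subtype.dist_eq] at h
    simpa using h
  -- Lipschitz facts
  have hlipn : ∀ n, ∀ x ∈ Set.Icc (0:ℝ) 1, ∀ y ∈ Set.Icc (0:ℝ) 1,
      dist (σn n x) (σn n y) ≤ K * dist x y := fun n x hx y hy => by
    have := (lipschitzOnWith_iff_dist_le_mul.1 (hσnLip n)) x hx y hy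
    rwa [hKnn] at this
  have hσcont : ContinuousOn σ (Set.Icc 0 1) := hσconv.continuousOn
    (Filter.Eventually.of_forall (fun n => ((hσnLip n).continuousOn))).frequently
  have hσlip : ∀ x ∈ Set.Icc (0:ℝ) 1, ∀ y ∈ Set.Icc (0:ℝ) 1,
      dist (σ x) (σ y) ≤ K * dist x y := by
    intro x hx y hy
    have h1 : Tendsto (fun n => dist (σn n x) (σn n y)) atTop (𝓝 (dist (σ x) (σ y))) :=
      (hσconv.tendsto_at hx).dist (hσconv.tendsto_at hy)
    exact le_of_tendsto h1 (Filter.Eventually.of_forall fun n => hlipn n x hx y hy)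
  set σc : ℝ → EuclideanSpace ℝ (Fin d) := fun r => σ (π r) with hσc
  set σcn : ℕ → ℝ → EuclideanSpace ℝ (Fin d) := fun n r => σn n (π r) with hσcn
  have hσclip : ∀ x y, dist (σc x) (σc y) ≤ K * dist x y := fun x y =>
    le_trans (hσlip _ (hπmem x) _ (hπmem y))
      (mul_le_mul_of_nonneg_left (hπlip x y) hK.le)
  have hσcnlip : ∀ n x y, dist (σcn n x) (σcn n y) ≤ K * dist x y := fun n x y =>
    le_trans (hlipn n _ (hπmem x) _ (hπmem y))
      (mul_le_mul_of_nonneg_left (hπlip x y) hK.le)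
  have hσceq : ∀ r ∈ Set.Icc (0:ℝ) 1, σc r = σ r := fun r hr => by
    simp only [hσc]; rw [hπeq r hr]
  have hσcneq : ∀ n, ∀ r ∈ Set.Icc (0:ℝ) 1, σcn n r = σn n r := fun n r hr => by
    simp only [hσcn]; rw [hπeq r hr]
  -- ball support a.e. facts
  have hcompl : ∀ (μ : Measure (EuclideanSpace ℝ (Fin d))),
      μ (Metric.closedBall (0 : EuclideanSpace ℝ (Fin d)) K')ᶜ = 0 ↔ (∀ᵐ w ∂μ, ‖w‖ ≤ K') := by
    intro μ
    have hset : {w : EuclideanSpace ℝ (Fin d) | ¬ ‖w‖ ≤ K'}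
        = (Metric.closedBall (0 : EuclideanSpace ℝ (Fin d)) K')ᶜ := by
      ext w
      simp [Metric.mem_closedBall, dist_zero_right]
    rw [ae_iff, hset]
  have hballn : ∀ n u, u ∈ Set.Icc (0:ℝ) 1 → ∀ᵐ w ∂(νn n u), ‖w‖ ≤ K' :=
    fun n u hu => (hcompl _).1 (hsupp n u hu)
  have hwint : ∀ (μ : Measure (EuclideanSpace ℝ (Fin d))) (_ : IsProbabilityMeasure μ),
      (∀ᵐ w ∂μ, ‖w‖ ≤ K') → Integrable (fun w : EuclideanSpace ℝ (Fin d) => w) μ := by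
    intro μ hm hb
    exact MeasureTheory.Integrable.mono' (integrable_const K') aestronglyMeasurable_id hb
  have hbary_bd : ∀ (μ : Measure (EuclideanSpace ℝ (Fin d))) (_ : IsProbabilityMeasure μ),
      (∀ᵐ w ∂μ, ‖w‖ ≤ K') → ‖∫ w, w ∂μ‖ ≤ K' := by
    intro μ hm hb
    calc ‖∫ w, w ∂μ‖ ≤ ∫ w, ‖w‖ ∂μ := norm_integral_le_integral_norm _
      _ ≤ ∫ _w, K' ∂μ := integral_mono_ae ((hwint μ hm hb).norm) (integrable_const K') hb
      _ = K' := by simp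
  have hmnbd : ∀ n u, u ∈ Set.Icc (0:ℝ) 1 → ‖∫ w, w ∂(νn n u)‖ ≤ K' :=
    fun n u hu => hbary_bd _ inferInstance (hballn n u hu)
  -- cutoff and truncated barycenters
  set χ : EuclideanSpace ℝ (Fin d) → ℝ := fun w => max 0 (min 1 (K' + 1 - ‖w‖)) with hχ
  have hχc : Continuous χ :=
    continuous_const.max (continuous_const.min (continuous_const.sub continuous_norm))
  have hχ0 : ∀ w, 0 ≤ χ w := fun w => le_max_left _ _
  have hχle1 : ∀ w, χ w ≤ 1 := fun w => max_le zero_le_one (min_le_left _ _)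
  have hχ1 : ∀ w, ‖w‖ ≤ K' → χ w = 1 := fun w hw => by
    have h1 : (1:ℝ) ≤ K' + 1 - ‖w‖ := by linarith
    simp only [hχ]
    rw [min_eq_left h1, max_eq_right zero_le_one]
  have hχsm : ∀ w, ‖χ w • w‖ ≤ K' + 1 := fun w => by
    rw [norm_smul, Real.norm_eq_abs, abs_of_nonneg (hχ0 w)]
    rcases le_or_gt ‖w‖ (K' + 1) with h | h
    · calc χ w * ‖w‖ ≤ 1 * (K' + 1) := mul_le_mul (hχle1 w) h (norm_nonneg w) zero_le_one
        _ = K' + 1 := one_mul _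
    · have hz : χ w = 0 := by
        simp only [hχ]
        apply max_eq_left
        exact le_trans (min_le_right _ _) (by linarith)
      rw [hz, zero_mul]; positivity
  have hχint : ∀ (μ : Measure (EuclideanSpace ℝ (Fin d))) (_ : IsProbabilityMeasure μ),
      Integrable (fun w => χ w • w) μ := fun μ _ =>
    MeasureTheory.Integrable.mono' (integrable_const (K' + 1))
      ((hχc.smul continuous_id).aestronglyMeasurable)
      (Filter.Eventually.of_forall hχsm)
  set Bfull : ℝ → EuclideanSpace ℝ (Fin d) := fun u => ∫ w, χ w • w ∂(ν u) with hBfull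
  set Bn : ℕ → ℝ → EuclideanSpace ℝ (Fin d) := fun n u => ∫ w, χ w • w ∂(νn n u) with hBn
  have hBfullbd : ∀ u, ‖Bfull u‖ ≤ K' + 1 := fun u => by
    simp only [hBfull]
    calc ‖∫ w, χ w • w ∂(ν u)‖ ≤ ∫ w, ‖χ w • w‖ ∂(ν u) := norm_integral_le_integral_norm _
      _ ≤ ∫ _w, (K' + 1) ∂(ν u) := integral_mono_ae ((hχint _ inferInstance).norm)
          (integrable_const _) (Filter.Eventually.of_forall hχsm)
      _ = K' + 1 := by simp
  have hBneq : ∀ n u, u ∈ Set.Icc (0:ℝ) 1 → Bn n u = ∫ w, w ∂(νn n u) := fun n u hu => by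
    simp only [hBn]
    apply integral_congr_ae
    filter_upwards [hballn n u hu] with w hw
    rw [hχ1 w hw, one_smul]
  -- coordinates
  have habs : ∀ (w : EuclideanSpace ℝ (Fin d)) (i : Fin d), |w i| ≤ ‖w‖ := by
    intro w i
    rw [EuclideanSpace.norm_eq]
    rw [show |w i| = Real.sqrt (|w i|^2) by rw [Real.sqrt_sq_eq_abs, abs_abs]]
    apply Real.sqrt_le_sqrt
    rw [sq_abs]
    have : ∀ j ∈ Finset.univ, (0:ℝ) ≤ ‖w j‖^2 := fun j _ => sq_nonneg _
    calc (w i)^2 = ‖w i‖^2 := by rw [Real.norm_eq_abs, sq_abs]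
      _ ≤ ∑ j, ‖w j‖^2 := Finset.single_le_sum this (Finset.mem_univ i)
  have hproj_smul : ∀ (c : ℝ) (w : EuclideanSpace ℝ (Fin d)) (i : Fin d),
      EuclideanSpace.proj (𝕜 := ℝ) i (c • w) = c * w i := by
    intro c w i
    rw [ContinuousLinearMap.map_smul]
    rfl
  have hprojB_bd : ∀ u (i : Fin d), |EuclideanSpace.proj (𝕜 := ℝ) i (Bfull u)| ≤ K' + 1 :=
    fun u i => le_trans (habs _ i) (hBfullbd u)
  -- derivative facts transported to the clamped curves
  have hvel' : ∀ n, ∀ᵐ u ∂(volume.restrict (Set.Ioo (0:ℝ) 1)),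
      HasDerivAt (σcn n) (∫ w, w ∂(νn n u)) u := by
    intro n
    filter_upwards [ae_restrict_of_ae_restrict_of_subset Set.Ioo_subset_Icc_self (hvel n),
      ae_restrict_mem measurableSet_Ioo] with u hu humem
    apply hu.congr_of_eventuallyEq
    filter_upwards [isOpen_Ioo.mem_nhds humem] with r hr
    exact hσcneq n r (Set.Ioo_subset_Icc_self hr)
  have hmnmeas : ∀ n, AEStronglyMeasurable (fun u => ∫ w, w ∂(νn n u))
      (volume.restrict (Set.Ioc (0:ℝ) 1)) := by
    intro n
    have h1 : ∀ᵐ u ∂(volume.restrict (Set.Ioo (0:ℝ) 1)),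
        deriv (σcn n) u = ∫ w, w ∂(νn n u) := by
      filter_upwards [hvel' n] with u hu using hu.deriv
    have h2 : AEStronglyMeasurable (deriv (σcn n)) (volume.restrict (Set.Ioo (0:ℝ) 1)) :=
      (stronglyMeasurable_deriv (σcn n)).aestronglyMeasurable
    have h3 := h2.congr h1
    rwa [Measure.restrict_congr_set Ioo_ae_eq_Ioc] at h3
  have hmnint : ∀ n, IntegrableOn (fun u => ∫ w, w ∂(νn n u)) (Set.Ioc 0 1) volume := by
    intro n
    apply MeasureTheory.Integrable.mono'
      (integrableOn_const measure_Ioc_lt_top.ne :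
        IntegrableOn (fun _ => K') (Set.Ioc (0:ℝ) 1) volume) (hmnmeas n)
    rw [MeasureTheory.ae_restrict_iff' measurableSet_Ioc]
    exact Filter.Eventually.of_forall fun u hu => hmnbd n u ⟨hu.1.le, hu.2⟩
  -- per-n fundamental theorem of calculus
  have hIdn : ∀ n, ∀ t ∈ Set.Icc (0:ℝ) 1,
      (∫ u in (0:ℝ)..t, ∫ w, w ∂(νn n u)) = σn n t - σn n 0 := by
    intro n t ht
    have hb : ∀ x y, ‖σcn n x - σcn n y‖ ≤ K * |x - y| := fun x y => by
      have := hσcnlip n x y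
      rwa [dist_eq_norm, Real.dist_eq] at this
    have hae : ∀ᵐ u ∂(volume.restrict (Set.Ioo (0:ℝ) t)),
        HasDerivAt (σcn n) ((fun u => ∫ w, w ∂(νn n u)) u) u :=
      ae_restrict_of_ae_restrict_of_subset (Set.Ioo_subset_Ioo (le_refl 0) ht.2) (hvel' n)
    have := aux_ftc hK.le hb ht.1 hae
    rw [this, hσcneq n t ht, hσcneq n 0 h0mem]
  -- key narrow-convergence consequence, coordinatewise with tent cutoffs
  have hmain : ∀ t ∈ Set.Icc (0:ℝ) 1, ∀ (j : ℕ), 1 ≤ j → ∀ i : Fin d,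
      IntervalIntegrable (fun u => tent t j u *
        (EuclideanSpace.proj (𝕜 := ℝ) i (Bfull u))) volume 0 1 ∧
      Tendsto (fun n => ∫ u in (0:ℝ)..1, tent t j u *
          (EuclideanSpace.proj (𝕜 := ℝ) i (∫ w, w ∂(νn n u)))) atTop
        (𝓝 (∫ u in (0:ℝ)..1, tent t j u * EuclideanSpace.proj (𝕜 := ℝ) i (Bfull u))) := by
    intro t ht j hj i
    have hj0 : (0:ℝ) < (j:ℝ) := by exact_mod_cast hj
    set ψ := tent t j with hψdef
    have hψc := tent_cont t j
    have hψII : IntervalIntegrable ψ volume 0 1 := hψc.intervalIntegrable 0 1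
    have hP : 0 < ∫ u in (0:ℝ)..1, ψ u := by
      rw [intervalIntegral.integral_of_le h01]
      rcases eq_or_lt_of_le ht.1 with ht0 | ht0
      · refine aux_pos_integral hψc (tent_nonneg t j) (u₀ := min (1/(2*j)) (1/2)) ?_ ?_
          (hψc.integrableOn_Ioc)
        · constructor
          · positivity
          · calc min (1/(2*(j:ℝ))) (1/2) ≤ 1/2 := min_le_right _ _
              _ < 1 := by norm_num
        · have hmemt : min (1/(2*(j:ℝ))) (1/2) ∉ Set.Icc (0:ℝ) t := by
            rw [← ht0]
            intro hmem
            have : (0:ℝ) < min (1/(2*(j:ℝ))) (1/2) := by positivity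
            have := hmem.2
            linarith
          have hd : Metric.infDist (min (1/(2*(j:ℝ))) (1/2)) (Set.Icc 0 t)
              ≤ min (1/(2*(j:ℝ))) (1/2) := by
            have h0m : (0:ℝ) ∈ Set.Icc (0:ℝ) t := ⟨le_refl 0, ht.1⟩
            have := Metric.infDist_le_dist_of_mem (x := min (1/(2*(j:ℝ))) (1/2)) h0m
            rwa [Real.dist_eq, sub_zero, abs_of_pos (by positivity)] at this
          have : 1 - j * Metric.infDist (min (1/(2*(j:ℝ))) (1/2)) (Set.Icc 0 t) ≥ 1/2 := by
            have h1 : (j:ℝ) * Metric.infDist (min (1/(2*(j:ℝ))) (1/2)) (Set.Icc 0 t)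
                ≤ (j:ℝ) * min (1/(2*(j:ℝ))) (1/2) := by
              apply mul_le_mul_of_nonneg_left hd hj0.le
            have h2 : (j:ℝ) * min (1/(2*(j:ℝ))) (1/2) ≤ (j:ℝ) * (1/(2*(j:ℝ))) := by
              apply mul_le_mul_of_nonneg_left (min_le_left _ _) hj0.le
            have h3 : (j:ℝ) * (1/(2*(j:ℝ))) = 1/2 := by field_simp
            nlinarith [h3]
          show 0 < ψ _
          simp only [hψdef, tent]
          calc (0:ℝ) < 1/2 := by norm_num
            _ ≤ 1 - j * Metric.infDist (min (1/(2*(j:ℝ))) (1/2)) (Set.Icc 0 t) := this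
            _ ≤ max 0 (1 - j * Metric.infDist (min (1/(2*(j:ℝ))) (1/2)) (Set.Icc 0 t)) :=
                le_max_right _ _
      · refine aux_pos_integral hψc (tent_nonneg t j) (u₀ := t/2) ?_ ?_ (hψc.integrableOn_Ioc)
        · exact ⟨by linarith, by nlinarith [ht.2]⟩
        · show 0 < ψ (t/2)
          rw [hψdef, tent_eq_one j ⟨by linarith, by linarith⟩]
          norm_num
    -- inner integral computation for any probability measure
    have hinner : ∀ (μ : Measure (EuclideanSpace ℝ (Fin d))) (_ : IsProbabilityMeasure μ)
        (u : ℝ) (c : ℝ), ∫ w, ψ u * (χ w * w i + c) ∂μ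
          = ψ u * ((EuclideanSpace.proj (𝕜 := ℝ) i (∫ w, χ w • w ∂μ)) + c) := by
      intro μ hμ u c
      rw [MeasureTheory.integral_const_mul]
      congr 1
      have h1 : Integrable (fun w : EuclideanSpace ℝ (Fin d) => χ w * w i) μ := by
        have h2 := (EuclideanSpace.proj (𝕜 := ℝ) i).integrable_comp (hχint μ inferInstance)
        apply h2.congr
        filter_upwards with w
        rw [hproj_smul]
      rw [aux_int_shift μ h1 c]
      congr 1
      rw [← ContinuousLinearMap.integral_comp_comm _ (hχint μ inferInstance)]
      apply integral_congr_ae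
      filter_upwards with w
      rw [hproj_smul]
    -- continuity and bound for the test function
    have hcontc : ∀ c : ℝ, Continuous (fun p : (EuclideanSpace ℝ (Fin d)) × ℝ =>
        ψ p.2 * (χ p.1 * p.1 i + c)) := by
      intro c
      apply Continuous.mul (hψc.comp continuous_snd)
      apply Continuous.add _ continuous_const
      exact (hχc.comp continuous_fst).mul
        ((EuclideanSpace.proj (𝕜 := ℝ) i).continuous.comp continuous_fst)
    have hbdc : ∀ c : ℝ, ∀ p : (EuclideanSpace ℝ (Fin d)) × ℝ,
        |ψ p.2 * (χ p.1 * p.1 i + c)| ≤ (K' + 1) + |c| := by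
      intro c p
      rw [abs_mul]
      have h1 : |ψ p.2| ≤ 1 := by
        rw [abs_of_nonneg (tent_nonneg t j p.2)]; exact tent_le_one t j p.2
      have h2 : |χ p.1 * p.1 i| ≤ K' + 1 := by
        rw [abs_mul, abs_of_nonneg (hχ0 p.1)]
        calc χ p.1 * |p.1 i| ≤ χ p.1 * ‖p.1‖ := by
              apply mul_le_mul_of_nonneg_left (habs p.1 i) (hχ0 p.1)
          _ = ‖χ p.1 • p.1‖ := by
              rw [norm_smul, Real.norm_eq_abs, abs_of_nonneg (hχ0 p.1)]
          _ ≤ K' + 1 := hχsm p.1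
      have h3 : |χ p.1 * p.1 i + c| ≤ (K' + 1) + |c| := by
        calc |χ p.1 * p.1 i + c| ≤ |χ p.1 * p.1 i| + |c| := abs_add_le _ _
          _ ≤ (K' + 1) + |c| := by linarith
      calc |ψ p.2| * |χ p.1 * p.1 i + c| ≤ 1 * ((K' + 1) + |c|) := by
            apply mul_le_mul h1 h3 (abs_nonneg _) zero_le_one
        _ = (K' + 1) + |c| := one_mul _
    -- the narrow convergence statement, rewritten
    have hseq : ∀ c : ℝ, Tendsto (fun n => ∫ u in (0:ℝ)..1,
        ψ u * (EuclideanSpace.proj (𝕜 := ℝ) i (Bn n u) + c)) atTop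
        (𝓝 (∫ u in (0:ℝ)..1, ψ u * (EuclideanSpace.proj (𝕜 := ℝ) i (Bfull u) + c))) := by
      intro c
      have hF := hnarrow (auxBCF _ (hcontc c) ((K' + 1) + |c|) (hbdc c))
      have heq1 : ∀ n, (∫ u in (0:ℝ)..1, ∫ w,
            (auxBCF _ (hcontc c) ((K' + 1) + |c|) (hbdc c)) (w, u) ∂(νn n u))
          = ∫ u in (0:ℝ)..1, ψ u * (EuclideanSpace.proj (𝕜 := ℝ) i (Bn n u) + c) := by
        intro n
        apply intervalIntegral.integral_congr
        intro u _
        simp only [auxBCF_apply]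
        exact hinner (νn n u) inferInstance u c
      have heq2 : (∫ u in (0:ℝ)..1, ∫ w,
            (auxBCF _ (hcontc c) ((K' + 1) + |c|) (hbdc c)) (w, u) ∂(ν u))
          = ∫ u in (0:ℝ)..1, ψ u * (EuclideanSpace.proj (𝕜 := ℝ) i (Bfull u) + c) := by
        apply intervalIntegral.integral_congr
        intro u _
        simp only [auxBCF_apply]
        exact hinner (ν u) inferInstance u c
      rw [← heq2]
      exact hF.congr heq1
    -- replace Bn by the true barycenter on [0,1]
    have hmniII : ∀ n, IntervalIntegrable
        (fun u => EuclideanSpace.proj (𝕜 := ℝ) i (∫ w, w ∂(νn n u))) volume 0 1 :=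
      fun n => (intervalIntegrable_iff_integrableOn_Ioc_of_le h01).2
        ((EuclideanSpace.proj (𝕜 := ℝ) i).integrable_comp (hmnint n))
    have hψmnII : ∀ n, IntervalIntegrable
        (fun u => ψ u * EuclideanSpace.proj (𝕜 := ℝ) i (∫ w, w ∂(νn n u))) volume 0 1 :=
      fun n => (hmniII n).continuousOn_mul hψc.continuousOn
    have h0' : Tendsto (fun n => ∫ u in (0:ℝ)..1,
        ψ u * EuclideanSpace.proj (𝕜 := ℝ) i (∫ w, w ∂(νn n u))) atTop
        (𝓝 (∫ u in (0:ℝ)..1, ψ u * EuclideanSpace.proj (𝕜 := ℝ) i (Bfull u))) := by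
      have h00 := hseq 0
      have e1 : ∀ n, (∫ u in (0:ℝ)..1, ψ u * (EuclideanSpace.proj (𝕜 := ℝ) i (Bn n u) + 0))
          = ∫ u in (0:ℝ)..1, ψ u * EuclideanSpace.proj (𝕜 := ℝ) i (∫ w, w ∂(νn n u)) := by
        intro n
        apply intervalIntegral.integral_congr
        intro u hu
        rw [Set.uIcc_of_le h01] at hu
        simp [hBneq n u hu]
      have e2 : (∫ u in (0:ℝ)..1, ψ u * (EuclideanSpace.proj (𝕜 := ℝ) i (Bfull u) + 0))
          = ∫ u in (0:ℝ)..1, ψ u * EuclideanSpace.proj (𝕜 := ℝ) i (Bfull u) := by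
        apply intervalIntegral.integral_congr
        intro u _
        simp
      rw [e2] at h00
      exact h00.congr e1
    have h1' : Tendsto (fun n => (∫ u in (0:ℝ)..1,
        ψ u * EuclideanSpace.proj (𝕜 := ℝ) i (∫ w, w ∂(νn n u))) + ∫ u in (0:ℝ)..1, ψ u) atTop
        (𝓝 (∫ u in (0:ℝ)..1, (ψ u * EuclideanSpace.proj (𝕜 := ℝ) i (Bfull u) + ψ u))) := by
      have hb1 := hseq 1
      have e1 : ∀ n, (∫ u in (0:ℝ)..1, ψ u * (EuclideanSpace.proj (𝕜 := ℝ) i (Bn n u) + 1))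
          = (∫ u in (0:ℝ)..1,
              ψ u * EuclideanSpace.proj (𝕜 := ℝ) i (∫ w, w ∂(νn n u))) + ∫ u in (0:ℝ)..1, ψ u := by
        intro n
        have e1a : (∫ u in (0:ℝ)..1, ψ u * (EuclideanSpace.proj (𝕜 := ℝ) i (Bn n u) + 1))
            = ∫ u in (0:ℝ)..1, (ψ u * EuclideanSpace.proj (𝕜 := ℝ) i (∫ w, w ∂(νn n u)) + ψ u) := by
          apply intervalIntegral.integral_congr
          intro u hu
          rw [Set.uIcc_of_le h01] at hu
          simp only [hBneq n u hu]
          ring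
        rw [e1a, intervalIntegral.integral_add (hψmnII n) hψII]
      have e2 : (∫ u in (0:ℝ)..1, ψ u * (EuclideanSpace.proj (𝕜 := ℝ) i (Bfull u) + 1))
          = ∫ u in (0:ℝ)..1, (ψ u * EuclideanSpace.proj (𝕜 := ℝ) i (Bfull u) + ψ u) := by
        apply intervalIntegral.integral_congr
        intro u _
        ring
      rw [e2] at hb1
      exact hb1.congr e1
    exact ⟨aux_junk (g := fun u => EuclideanSpace.proj (𝕜 := ℝ) i (Bfull u)) hψII hP h0' h1', h0'⟩
  -- integrability and measurability of the truncated barycenter of ν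
  have h1mem : (1:ℝ) ∈ Set.Icc (0:ℝ) 1 := ⟨zero_le_one, le_refl 1⟩
  have hBiII : ∀ i : Fin d, IntegrableOn
      (fun u => EuclideanSpace.proj (𝕜 := ℝ) i (Bfull u)) (Set.Ioc 0 1) volume := by
    intro i
    have h := (hmain 1 h1mem 1 (le_refl 1) i).1
    have h2 := (intervalIntegrable_iff_integrableOn_Ioc_of_le h01).1 h
    apply MeasureTheory.IntegrableOn.congr_fun h2 _ measurableSet_Ioc
    intro u hu
    simp only [tent_eq_one 1 ⟨hu.1.le, hu.2⟩, one_mul]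
  have hBmeasIoc : AEStronglyMeasurable Bfull (volume.restrict (Set.Ioc (0:ℝ) 1)) := by
    have hrepr : ∀ u, Bfull u = ∑ i : Fin d, (EuclideanSpace.proj (𝕜 := ℝ) i (Bfull u)) •
        (EuclideanSpace.basisFun (Fin d) ℝ) i := by
      intro u
      have h2 : ∀ i : Fin d, EuclideanSpace.proj (𝕜 := ℝ) i (Bfull u)
          = (EuclideanSpace.basisFun (Fin d) ℝ).repr (Bfull u) i := by
        intro i
        rw [EuclideanSpace.basisFun_repr]
        rfl
      rw [Finset.sum_congr rfl (fun i _ => by rw [h2 i])]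
      exact ((EuclideanSpace.basisFun (Fin d) ℝ).sum_repr (Bfull u)).symm
    have hsum : AEStronglyMeasurable (fun u => ∑ i : Fin d,
        (EuclideanSpace.proj (𝕜 := ℝ) i (Bfull u)) • (EuclideanSpace.basisFun (Fin d) ℝ) i)
        (volume.restrict (Set.Ioc (0:ℝ) 1)) := by
      apply Finset.aestronglyMeasurable_fun_sum
      intro i _
      exact ((hBiII i).aestronglyMeasurable).smul aestronglyMeasurable_const
    exact hsum.congr (Filter.Eventually.of_forall (fun u => (hrepr u).symm))
  set B : ℝ → EuclideanSpace ℝ (Fin d) := (Set.Ioc (0:ℝ) 1).indicator Bfull with hB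
  have hBint : Integrable B volume := by
    rw [hB, integrable_indicator_iff measurableSet_Ioc]
    apply MeasureTheory.Integrable.mono'
      (integrableOn_const measure_Ioc_lt_top.ne :
        IntegrableOn (fun _ => K' + 1) (Set.Ioc (0:ℝ) 1) volume) hBmeasIoc
    exact Filter.Eventually.of_forall fun u => hBfullbd u
  have hBII : ∀ a b : ℝ, IntervalIntegrable B volume a b := fun a b => hBint.intervalIntegrable
  -- the integral identity for the limit curve
  have hId : ∀ t ∈ Set.Icc (0:ℝ) 1, σ t = σ 0 + ∫ u in (0:ℝ)..t, B u := by
    intro t ht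
    have hkey : ∀ i : Fin d, EuclideanSpace.proj (𝕜 := ℝ) i (σ t - σ 0)
        = ∫ u in Set.Ioc 0 t, EuclideanSpace.proj (𝕜 := ℝ) i (Bfull u) := by
      intro i
      set X := EuclideanSpace.proj (𝕜 := ℝ) i (σ t - σ 0) with hX
      set Y := ∫ u in Set.Ioc 0 t, EuclideanSpace.proj (𝕜 := ℝ) i (Bfull u) with hY
      have hbnd : ∀ j : ℕ, 1 ≤ j → |X - Y| ≤ 2 * ((K' + 1) / j) := by
        intro j hj
        obtain ⟨hII, htend⟩ := hmain t ht j hj i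
        have htend' : Tendsto (fun n => ∫ u in Set.Ioc (0:ℝ) 1,
            tent t j u * EuclideanSpace.proj (𝕜 := ℝ) i (∫ w, w ∂(νn n u))) atTop
            (𝓝 (∫ u in Set.Ioc (0:ℝ) 1,
              tent t j u * EuclideanSpace.proj (𝕜 := ℝ) i (Bfull u))) := by
          rw [← intervalIntegral.integral_of_le h01]
          apply htend.congr
          intro n
          rw [intervalIntegral.integral_of_le h01]
        have hA : |X - ∫ u in Set.Ioc (0:ℝ) 1,
            tent t j u * EuclideanSpace.proj (𝕜 := ℝ) i (Bfull u)| ≤ (K' + 1)/j := by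
          have hn : ∀ n, |EuclideanSpace.proj (𝕜 := ℝ) i (σn n t - σn n 0)
              - ∫ u in Set.Ioc (0:ℝ) 1, tent t j u *
                EuclideanSpace.proj (𝕜 := ℝ) i (∫ w, w ∂(νn n u))| ≤ (K' + 1)/j := by
            intro n
            have h3 : (∫ u in Set.Ioc 0 t, EuclideanSpace.proj (𝕜 := ℝ) i (∫ w, w ∂(νn n u)))
                = EuclideanSpace.proj (𝕜 := ℝ) i (σn n t - σn n 0) := by
              have hIImn : IntervalIntegrable (fun u => ∫ w, w ∂(νn n u)) volume 0 t :=
                (intervalIntegrable_iff_integrableOn_Ioc_of_le ht.1).2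
                  ((hmnint n).mono_set (Set.Ioc_subset_Ioc_right ht.2))
              rw [← intervalIntegral.integral_of_le ht.1,
                ContinuousLinearMap.intervalIntegral_comp_comm _ hIImn, hIdn n t ht]
            rw [← h3]
            have habs2 : ∀ u ∈ Set.Ioc (0:ℝ) 1,
                |EuclideanSpace.proj (𝕜 := ℝ) i (∫ w, w ∂(νn n u))| ≤ K' + 1 := by
              intro u hu
              exact le_trans (le_trans (habs _ i) (hmnbd n u ⟨hu.1.le, hu.2⟩)) (by linarith)
            have := aux_tent_bound (C := K' + 1) (by linarith)
              ((EuclideanSpace.proj (𝕜 := ℝ) i).integrable_comp (hmnint n)) habs2 ht hj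
            rw [abs_sub_comm]
            exact this
          have hconvn : Tendsto (fun n => |EuclideanSpace.proj (𝕜 := ℝ) i (σn n t - σn n 0)
              - ∫ u in Set.Ioc (0:ℝ) 1, tent t j u *
                EuclideanSpace.proj (𝕜 := ℝ) i (∫ w, w ∂(νn n u))|) atTop
              (𝓝 |X - ∫ u in Set.Ioc (0:ℝ) 1,
                tent t j u * EuclideanSpace.proj (𝕜 := ℝ) i (Bfull u)|) := by
            apply Filter.Tendsto.abs
            apply Filter.Tendsto.sub _ htend'
            have hst : Tendsto (fun n => σn n t - σn n 0) atTop (𝓝 (σ t - σ 0)) :=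
              (hσconv.tendsto_at ht).sub (hσconv.tendsto_at h0mem)
            exact ((EuclideanSpace.proj (𝕜 := ℝ) i).continuous.tendsto _).comp hst
          exact le_of_tendsto hconvn (Filter.Eventually.of_forall hn)
        have hB2 : |(∫ u in Set.Ioc (0:ℝ) 1,
            tent t j u * EuclideanSpace.proj (𝕜 := ℝ) i (Bfull u)) - Y| ≤ (K' + 1)/j := by
          apply aux_tent_bound (C := K' + 1) (by linarith) (hBiII i) _ ht hj
          intro u _
          exact hprojB_bd u i
        calc |X - Y| ≤ |X - ∫ u in Set.Ioc (0:ℝ) 1,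
              tent t j u * EuclideanSpace.proj (𝕜 := ℝ) i (Bfull u)|
            + |(∫ u in Set.Ioc (0:ℝ) 1,
              tent t j u * EuclideanSpace.proj (𝕜 := ℝ) i (Bfull u)) - Y| := abs_sub_le _ _ _
          _ ≤ (K' + 1)/j + (K' + 1)/j := add_le_add hA hB2
          _ = 2 * ((K' + 1)/j) := by ring
      have hzero : Tendsto (fun j : ℕ => 2 * ((K' + 1) / j)) atTop (𝓝 0) := by
        have h1 : Tendsto (fun j : ℕ => (K' + 1) / j) atTop (𝓝 0) :=
          tendsto_const_div_atTop_nhds_zero_nat (K' + 1)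
        have := h1.const_mul 2
        simpa using this
      have hle : |X - Y| ≤ 0 := by
        apply ge_of_tendsto hzero
        filter_upwards [eventually_ge_atTop 1] with j hj
        exact hbnd j hj
      have := le_antisymm hle (abs_nonneg _)
      have := abs_eq_zero.1 this
      linarith [sub_eq_zero.1 this, le_refl X]
    -- assemble the vector identity
    have hfin : ∀ i : Fin d, (σ t) i = (σ 0 + ∫ u in (0:ℝ)..t, B u) i := by
      intro i
      have h1 := hkey i
      have h2 : EuclideanSpace.proj (𝕜 := ℝ) i (σ t - σ 0) = (σ t) i - (σ 0) i := by
        rw [map_sub]; rfl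
      have h3 : (∫ u in Set.Ioc 0 t, EuclideanSpace.proj (𝕜 := ℝ) i (Bfull u))
          = EuclideanSpace.proj (𝕜 := ℝ) i (∫ u in (0:ℝ)..t, B u) := by
        have e1 : (∫ u in Set.Ioc 0 t, EuclideanSpace.proj (𝕜 := ℝ) i (Bfull u))
            = ∫ u in Set.Ioc 0 t, EuclideanSpace.proj (𝕜 := ℝ) i (B u) := by
          apply MeasureTheory.setIntegral_congr_fun measurableSet_Ioc
          intro u hu
          have : u ∈ Set.Ioc (0:ℝ) 1 := ⟨hu.1, le_trans hu.2 ht.2⟩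
          rw [hB]
          simp [Set.indicator_of_mem this]
        rw [e1, ← intervalIntegral.integral_of_le ht.1,
          ContinuousLinearMap.intervalIntegral_comp_comm _ (hBII 0 t)]
      rw [h2, h3] at h1
      have : (σ 0 + ∫ u in (0:ℝ)..t, B u) i = (σ 0) i + (∫ u in (0:ℝ)..t, B u) i := rfl
      rw [this]
      have h4 : EuclideanSpace.proj (𝕜 := ℝ) i (∫ u in (0:ℝ)..t, B u)
          = (∫ u in (0:ℝ)..t, B u) i := rfl
      rw [h4] at h1
      linarith
    ext i
    exact hfin i
  -- a.e. ball support for the limit measures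
  have hballν : ∀ᵐ u ∂(volume.restrict (Set.Ioc (0:ℝ) 1)),
      ν u (Metric.closedBall (0 : EuclideanSpace ℝ (Fin d)) K')ᶜ = 0 := by
    set g : EuclideanSpace ℝ (Fin d) → ℝ := fun w => max 0 (min 1 (‖w‖ - K')) with hg
    have hgc : Continuous g :=
      continuous_const.max (continuous_const.min (continuous_norm.sub continuous_const))
    have hg0 : ∀ w, 0 ≤ g w := fun w => le_max_left _ _
    have hg1 : ∀ w, g w ≤ 1 := fun w => max_le zero_le_one (min_le_left _ _)
    have hgz : ∀ w : EuclideanSpace ℝ (Fin d), ‖w‖ ≤ K' → g w = 0 := fun w hw => by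
      simp only [hg]
      exact max_eq_left (le_trans (min_le_right _ _) (by linarith))
    have hgbd : ∀ w : EuclideanSpace ℝ (Fin d), |g w| ≤ 1 := fun w => by
      rw [abs_of_nonneg (hg0 w)]; exact hg1 w
    have hgint : ∀ (μ : Measure (EuclideanSpace ℝ (Fin d))) (_ : IsProbabilityMeasure μ),
        Integrable g μ := fun μ hμ => aux_int_bdd μ hgc hgbd
    have hcontc : ∀ c : ℝ, Continuous
        (fun p : (EuclideanSpace ℝ (Fin d)) × ℝ => g p.1 + c) := fun c =>
      (hgc.comp continuous_fst).add continuous_const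
    have hbdc : ∀ c : ℝ, ∀ p : (EuclideanSpace ℝ (Fin d)) × ℝ, |g p.1 + c| ≤ 1 + |c| :=
      fun c p => le_trans (abs_add_le _ _) (add_le_add (hgbd p.1) (le_refl _))
    have hseqg : ∀ c : ℝ, Tendsto (fun n => ∫ u in (0:ℝ)..1, ((∫ w, g w ∂(νn n u)) + c)) atTop
        (𝓝 (∫ u in (0:ℝ)..1, ((∫ w, g w ∂(ν u)) + c))) := by
      intro c
      have hF := hnarrow (auxBCF _ (hcontc c) (1 + |c|) (hbdc c))
      have heq1 : ∀ n, (∫ u in (0:ℝ)..1, ∫ w,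
            (auxBCF _ (hcontc c) (1 + |c|) (hbdc c)) (w, u) ∂(νn n u))
          = ∫ u in (0:ℝ)..1, ((∫ w, g w ∂(νn n u)) + c) := by
        intro n
        apply intervalIntegral.integral_congr
        intro u _
        simp only [auxBCF_apply]
        exact aux_int_shift _ (hgint _ inferInstance) c
      have heq2 : (∫ u in (0:ℝ)..1, ∫ w,
            (auxBCF _ (hcontc c) (1 + |c|) (hbdc c)) (w, u) ∂(ν u))
          = ∫ u in (0:ℝ)..1, ((∫ w, g w ∂(ν u)) + c) := by
        apply intervalIntegral.integral_congr
        intro u _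
        simp only [auxBCF_apply]
        exact aux_int_shift _ (hgint _ inferInstance) c
      rw [← heq2]
      exact hF.congr heq1
    have hval : ∀ n u, u ∈ Set.Icc (0:ℝ) 1 → (∫ w, g w ∂(νn n u)) = 0 := by
      intro n u hu
      rw [← MeasureTheory.integral_zero (EuclideanSpace ℝ (Fin d)) ℝ
        (μ := νn n u)]
      apply integral_congr_ae
      filter_upwards [hballn n u hu] with w hw
      exact hgz w hw
    have hseqval : ∀ c : ℝ, ∀ n, (∫ u in (0:ℝ)..1, ((∫ w, g w ∂(νn n u)) + c)) = c := by
      intro c n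
      have e1 : (∫ u in (0:ℝ)..1, ((∫ w, g w ∂(νn n u)) + c)) = ∫ _u in (0:ℝ)..1, c := by
        apply intervalIntegral.integral_congr
        intro u hu
        rw [Set.uIcc_of_le h01] at hu
        simp only [hval n u hu, zero_add]
      rw [e1, intervalIntegral.integral_const, smul_eq_mul]
      ring
    have hlim : ∀ c : ℝ, (∫ u in (0:ℝ)..1, ((∫ w, g w ∂(ν u)) + c)) = c := by
      intro c
      have h1 := hseqg c
      have h2 : Tendsto (fun n => ∫ u in (0:ℝ)..1, ((∫ w, g w ∂(νn n u)) + c)) atTop (𝓝 c) := by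
        apply Tendsto.congr (fun n => (hseqval c n).symm) tendsto_const_nhds
      exact (tendsto_nhds_unique h1 h2)
    have hGII : IntervalIntegrable (fun u => ∫ w, g w ∂(ν u)) volume 0 1 := by
      by_contra hni
      have h2 : ¬ IntervalIntegrable (fun u => (∫ w, g w ∂(ν u)) + 1) volume 0 1 := by
        intro hsum
        exact hni (by simpa using hsum.sub (intervalIntegrable_const (c := (1:ℝ))))
      have := hlim 1
      rw [intervalIntegral.integral_undef h2] at this
      norm_num at this
    have hG0 : (∫ u in (0:ℝ)..1, ∫ w, g w ∂(ν u)) = 0 := by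
      have := hlim 0
      simpa using this
    have hGzero : ∀ᵐ u ∂(volume.restrict (Set.Ioc (0:ℝ) 1)), (∫ w, g w ∂(ν u)) = 0 := by
      have hIntOn : IntegrableOn (fun u => ∫ w, g w ∂(ν u)) (Set.Ioc 0 1) volume :=
        (intervalIntegrable_iff_integrableOn_Ioc_of_le h01).1 hGII
      have hnn : 0 ≤ᵐ[volume.restrict (Set.Ioc (0:ℝ) 1)] (fun u => ∫ w, g w ∂(ν u)) :=
        Filter.Eventually.of_forall (fun u => integral_nonneg hg0)
      have hz : (∫ u in Set.Ioc (0:ℝ) 1, ∫ w, g w ∂(ν u)) = 0 := by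
        rw [← intervalIntegral.integral_of_le h01]
        exact hG0
      have := (MeasureTheory.integral_eq_zero_iff_of_nonneg_ae hnn hIntOn).1 hz
      filter_upwards [this] with u hu using hu
    filter_upwards [hGzero] with u hu
    have hnull := aux_zero_ae (ν u) hgc hg0 hg1 hu
    apply measure_mono_null _ hnull
    intro w hw
    simp only [Set.mem_compl_iff, Metric.mem_closedBall, dist_zero_right] at hw
    push_neg at hw
    simp only [Set.mem_setOf_eq]
    intro hzero
    have : 0 < min 1 (‖w‖ - K') := lt_min one_pos (by linarith)
    have h2 : 0 < g w := lt_of_lt_of_le this (le_max_right _ _)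
    linarith [hzero ▸ h2]
  -- Lebesgue differentiation and conclusion of part 1
  have hLeb : ∀ᵐ u ∂(volume : Measure ℝ), Tendsto
      (fun r => ⨍ y in Metric.closedBall u r, ‖B y - B u‖) (𝓝[>] 0) (𝓝 0) := by
    filter_upwards [(Besicovitch.vitaliFamily
      (volume : Measure ℝ)).ae_tendsto_average_norm_sub hBint.locallyIntegrable] with u hu
    exact hu.comp (Besicovitch.tendsto_filterAt volume u)
  have hIoo : ∀ᵐ u ∂(volume.restrict (Set.Icc (0:ℝ) 1)), u ∈ Set.Ioo (0:ℝ) 1 := by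
    rw [ae_iff, Measure.restrict_apply' measurableSet_Icc]
    apply measure_mono_null (t := ({0, 1} : Set ℝ))
    · rintro u ⟨hu1, hu2⟩
      simp only [Set.mem_setOf_eq, Set.mem_Ioo, not_and, not_lt] at hu1
      simp only [Set.mem_insert_iff, Set.mem_singleton_iff]
      rcases eq_or_lt_of_le hu2.1 with h0 | h0
      · left; exact h0.symm
      · right; exact le_antisymm hu2.2 (hu1 h0)
    · exact ((Set.countable_singleton (1:ℝ)).insert 0).measure_zero volume
  constructor
  · -- Part 1: velocity of the limit curve
    filter_upwards [ae_restrict_of_ae hLeb, hIoo, aux_Ioc_to_Icc hballν] with u hLb hu hb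
    have hBu : B u = ∫ w, w ∂(ν u) := by
      have humem : u ∈ Set.Ioc (0:ℝ) 1 := ⟨hu.1, hu.2.le⟩
      rw [hB, Set.indicator_of_mem humem]
      apply integral_congr_ae
      filter_upwards [(hcompl _).1 hb] with w hw
      rw [hχ1 w hw, one_smul]
    have hD0 : HasDerivAt (fun r => ∫ u' in (0:ℝ)..r, B u') (B u) u := aux_deriv_point hBint hLb
    have hD : HasDerivAt (fun r => σ 0 + ∫ u' in (0:ℝ)..r, B u') (B u) u := hD0.const_add (σ 0)
    have hEq : σ =ᶠ[𝓝 u] (fun r => σ 0 + ∫ u' in (0:ℝ)..r, B u') := by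
      filter_upwards [isOpen_Ioo.mem_nhds hu] with r hr
      exact hId r ⟨hr.1.le, hr.2.le⟩
    have hfinal := hD.congr_of_eventuallyEq hEq
    rwa [hBu] at hfinal
  · -- Part 2: support of the limit measures on the rays
    rcases Nat.eq_zero_or_pos N with hN | hN
    · -- N = 0 : the hypotheses are contradictory
      exfalso
      subst hN
      haveI hne : Filter.NeBot (ae (volume.restrict (Set.Icc (0:ℝ) 1))) := by
        refine ae_neBot.2 (fun h => ?_)
        rw [Measure.restrict_eq_zero, Real.volume_Icc] at h
        norm_num at h
      obtain ⟨t0, ht0⟩ := (hray 0).exists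
      have hempty : {w : EuclideanSpace ℝ (Fin d) |
          ∃ k : Fin 0, ∃ s : ℝ, 0 ≤ s ∧ w = s • v k (σn 0 t0)} = ∅ := by
        ext w
        simp only [Set.mem_setOf_eq, Set.mem_empty_iff_false, iff_false, not_exists]
        exact fun k => k.elim0
      rw [hempty, Set.compl_empty] at ht0
      have : (νn 0 t0) Set.univ = 1 := measure_univ
      rw [ht0] at this
      norm_num at this
    -- N ≥ 1
    have k0 : Fin N := ⟨0, hN⟩
    haveI : Nonempty (Fin N) := ⟨k0⟩
    set R : EuclideanSpace ℝ (Fin d) → Set (EuclideanSpace ℝ (Fin d)) :=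
      fun x => {w | ∃ k : Fin N, ∃ s : ℝ, 0 ≤ s ∧ w = s • v k x} with hR
    have hRclosed : ∀ x, IsClosed (R x) := by
      intro x
      have hRunion : R x = ⋃ k : Fin N, {w | ∃ s : ℝ, 0 ≤ s ∧ w = s • v k x} := by
        ext w
        simp only [hR, Set.mem_setOf_eq, Set.mem_iUnion]
      rw [hRunion]
      exact isClosed_iUnion_of_finite (fun k => aux_ray_closed (hv_unit k x))
    have hR0 : ∀ x, (0 : EuclideanSpace ℝ (Fin d)) ∈ R x := fun x =>
      ⟨k0, 0, le_refl 0, by rw [zero_smul]⟩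
    have hRne : ∀ x, (R x).Nonempty := fun x => ⟨0, hR0 x⟩
    have hRmem : ∀ (x : EuclideanSpace ℝ (Fin d)) (k : Fin N) (s : ℝ), 0 ≤ s →
        s • v k x ∈ R x := fun x k s hs => ⟨k, s, hs, rfl⟩
    -- compactness and uniform continuity
    have hQim : IsCompact (σ '' Set.Icc 0 1) := isCompact_Icc.image_of_continuousOn hσcont
    set Q := Metric.cthickening 1 (σ '' Set.Icc 0 1) with hQ
    have hQcomp : IsCompact Q := hQim.cthickening
    have hQmem : ∀ u ∈ Set.Icc (0:ℝ) 1, σ u ∈ Q := fun u hu =>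
      Metric.self_subset_cthickening _ ⟨u, hu, rfl⟩
    have hQmemc : ∀ r : ℝ, σc r ∈ Q := fun r => hQmem _ (hπmem r)
    have hUC : ∀ ε : ℝ, 0 < ε → ∃ η, 0 < η ∧ ∀ k : Fin N, ∀ x ∈ Q, ∀ y ∈ Q,
        dist x y < η → dist (v k x) (v k y) < ε := by
      intro ε hε
      have hk : ∀ k : Fin N, ∃ η, 0 < η ∧ ∀ x ∈ Q, ∀ y ∈ Q,
          dist x y < η → dist (v k x) (v k y) < ε := by
        intro k
        have h1 := hQcomp.uniformContinuousOn_of_continuous ((hv_cont k).continuousOn)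
        rw [Metric.uniformContinuousOn_iff] at h1
        obtain ⟨δ, hδ, h2⟩ := h1 ε hε
        exact ⟨δ, hδ, fun x hx y hy hd => h2 x hx y hy hd⟩
      choose η hη hcond using hk
      refine ⟨Finset.univ.inf' Finset.univ_nonempty η, ?_, ?_⟩
      · rw [Finset.lt_inf'_iff]
        exact fun k _ => hη k
      · intro k x hx y hy hd
        apply hcond k x hx y hy
        exact lt_of_lt_of_le hd (Finset.inf'_le _ (Finset.mem_univ k))
    -- the main estimate, for each small ε
    have hP2 : ∀ ε : ℝ, 0 < ε → ε ≤ 1 → ∀ᵐ u ∂(volume.restrict (Set.Ioc (0:ℝ) 1)),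
        ν u {w | ‖w‖ ≤ K' ∧ (3*K' + 2)*ε < Metric.infDist w (R (σ u))} = 0 := by
      intro ε hε hε1
      obtain ⟨η, hη, hUCε⟩ := hUC ε hε
      set δw : ℝ := min (η / (K + 1)) 1 with hδw
      have hδw0 : 0 < δw := lt_min (by positivity) one_pos
      have hKδw : K * (δw/2) ≤ η/2 := by
        have h1 : δw ≤ η / (K + 1) := min_le_left _ _
        have h2 : K * δw ≤ K * (η / (K + 1)) := by
          apply mul_le_mul_of_nonneg_left h1 hK.le
        have h3 : K * (η / (K + 1)) ≤ η := by
          rw [mul_div_assoc', div_le_iff₀ (by positivity)]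
          nlinarith
        linarith
      -- tents at rational centers and ray detectors
      set ψq : ℚ → ℝ → ℝ := fun q u => max 0 (1 - (2/δw) * |u - (q:ℝ)|) with hψq
      have hψqc : ∀ q, Continuous (ψq q) := fun q =>
        continuous_const.max (continuous_const.sub (continuous_const.mul
          ((continuous_id.sub continuous_const).abs)))
      have hψq0 : ∀ q u, 0 ≤ ψq q u := fun q u => le_max_left _ _
      have hψq1 : ∀ q u, ψq q u ≤ 1 := fun q u => by
        apply max_le zero_le_one
        have : 0 ≤ (2/δw) * |u - (q:ℝ)| := by positivity
        linarith
      have hψne : ∀ q u, ψq q u ≠ 0 → |u - (q:ℝ)| < δw/2 := by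
        intro q u h
        by_contra hcon
        push_neg at hcon
        apply h
        simp only [hψq]
        apply max_eq_left
        have h1 : (2/δw) * (δw/2) ≤ (2/δw) * |u - (q:ℝ)| := by
          apply mul_le_mul_of_nonneg_left hcon (by positivity)
        have h2 : (2/δw) * (δw/2) = 1 := by field_simp
        linarith
      set hq : ℚ → EuclideanSpace ℝ (Fin d) → ℝ :=
        fun q w => max 0 (min (Metric.infDist w (R (σc (q:ℝ))) - K'*ε) 1) with hhq
      have hqc : ∀ q, Continuous (hq q) := fun q =>
        continuous_const.max (((Metric.continuous_infDist_pt _).sub continuous_const).min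
          continuous_const)
      have hq0 : ∀ (q : ℚ) w, 0 ≤ hq q w := fun q w => le_max_left _ _
      have hqle1 : ∀ (q : ℚ) w, hq q w ≤ 1 := fun q w => max_le zero_le_one (min_le_right _ _)
      have hqz : ∀ (q : ℚ) w, Metric.infDist w (R (σc (q:ℝ))) ≤ K'*ε → hq q w = 0 := by
        intro q w h
        simp only [hhq]
        exact max_eq_left (le_trans (min_le_left _ _) (by linarith))
      have hqz' : ∀ (q : ℚ) w, hq q w = 0 → Metric.infDist w (R (σc (q:ℝ))) ≤ K'*ε := by
        intro q w h
        by_contra hcon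
        push_neg at hcon
        have h1 : 0 < min (Metric.infDist w (R (σc (q:ℝ))) - K'*ε) 1 :=
          lt_min (by linarith) one_pos
        have h2 : 0 < hq q w := lt_of_lt_of_le h1 (le_max_right _ _)
        rw [h] at h2
        exact lt_irrefl 0 h2
      -- uniform closeness of the curves
      obtain ⟨n₀, hn₀⟩ : ∃ n₀, ∀ n ≥ n₀, ∀ u ∈ Set.Icc (0:ℝ) 1,
          dist (σ u) (σn n u) < min (η/2) 1 := by
        have h1 := (Metric.tendstoUniformlyOn_iff.1 hσconv) (min (η/2) 1)
          (lt_min (by positivity) one_pos)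
        rw [Filter.eventually_atTop] at h1
        obtain ⟨n₀, hn₀⟩ := h1
        exact ⟨n₀, fun n hn u hu => hn₀ n hn u hu⟩
      -- per-rational detector identity
      have hdetect : ∀ q : ℚ, 0 < (q:ℝ) → (q:ℝ) < 1 →
          ∀ᵐ u ∂(volume.restrict (Set.Ioc (0:ℝ) 1)),
            ψq q u * (∫ w, hq q w ∂(ν u)) = 0 := by
        intro q hql hqr
        have hqint : ∀ (μ : Measure (EuclideanSpace ℝ (Fin d))) (_ : IsProbabilityMeasure μ),
            Integrable (hq q) μ := fun μ _ => aux_int_bdd μ (hqc q)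
          (C := 1) (fun w => by rw [abs_of_nonneg (hq0 q w)]; exact hqle1 q w)
        -- vanishing of the detector along νn
        have hvanish : ∀ n, n₀ ≤ n → ∀ᵐ u ∂(volume.restrict (Set.Ioc (0:ℝ) 1)),
            ψq q u = 0 ∨ (∫ w, hq q w ∂(νn n u)) = 0 := by
          intro n hn
          filter_upwards [ae_restrict_of_ae_restrict_of_subset Set.Ioc_subset_Icc_self (hray n),
            ae_restrict_mem measurableSet_Ioc] with u hub huIoc
          rcases eq_or_ne (ψq q u) 0 with h | h
          · exact Or.inl h
          · right
            have huq : |u - (q:ℝ)| < δw/2 := hψne q u h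
            have huIcc : u ∈ Set.Icc (0:ℝ) 1 := ⟨huIoc.1.le, huIoc.2⟩
            have hmemae : ∀ᵐ w ∂(νn n u),
                ∃ k : Fin N, ∃ s : ℝ, 0 ≤ s ∧ w = s • v k (σn n u) := by
              rw [ae_iff, ← Set.compl_setOf]
              exact hub
            have hzero : ∀ᵐ w ∂(νn n u), hq q w = 0 := by
              filter_upwards [hmemae, hballn n u huIcc] with w hwray hwK
              obtain ⟨k, sr, hsr, rfl⟩ := hwray
              have hsnorm : ‖sr • v k (σn n u)‖ = sr := by
                rw [norm_smul, hv_unit, Real.norm_eq_abs, abs_of_nonneg hsr, mul_one]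
              have hsK : sr ≤ K' := by rw [← hsnorm]; exact hwK
              -- distances
              have hd1 : dist (σn n u) (σc (q:ℝ)) < η := by
                have e1 : dist (σ u) (σn n u) < η/2 :=
                  lt_of_lt_of_le (hn₀ n hn u huIcc) (min_le_left _ _)
                have e2 : dist (σ u) (σc (q:ℝ)) ≤ η/2 := by
                  rw [← hσceq u huIcc]
                  calc dist (σc u) (σc (q:ℝ)) ≤ K * dist u (q:ℝ) := hσclip _ _
                    _ ≤ K * (δw/2) := by
                        apply mul_le_mul_of_nonneg_left _ hK.le
                        rw [Real.dist_eq]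
                        exact huq.le
                    _ ≤ η/2 := hKδw
                calc dist (σn n u) (σc (q:ℝ))
                    ≤ dist (σn n u) (σ u) + dist (σ u) (σc (q:ℝ)) := dist_triangle _ _ _
                  _ < η/2 + η/2 := by
                      rw [dist_comm (σn n u) (σ u)]
                      exact add_lt_add_of_lt_of_le e1 e2
                  _ = η := by ring
              have hmemQ1 : σn n u ∈ Q := by
                apply Metric.mem_cthickening_of_dist_le (σn n u) (σ u) 1
                  (σ '' Set.Icc 0 1) ⟨u, huIcc, rfl⟩
                rw [dist_comm]
                exact (lt_of_lt_of_le (hn₀ n hn u huIcc) (min_le_right _ _)).le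

              have hvd : dist (v k (σn n u)) (v k (σc (q:ℝ))) < ε :=
                hUCε k _ hmemQ1 _ (hQmemc (q:ℝ)) hd1
              have hDest : Metric.infDist (sr • v k (σn n u)) (R (σc (q:ℝ))) ≤ K'*ε := by
                calc Metric.infDist (sr • v k (σn n u)) (R (σc (q:ℝ)))
                    ≤ dist (sr • v k (σn n u)) (sr • v k (σc (q:ℝ))) :=
                      Metric.infDist_le_dist_of_mem (hRmem _ k sr hsr)
                  _ = sr * dist (v k (σn n u)) (v k (σc (q:ℝ))) := by
                      rw [dist_smul₀, Real.norm_eq_abs, abs_of_nonneg hsr]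
                  _ ≤ K' * ε := by
                      apply mul_le_mul hsK hvd.le dist_nonneg hK'.le
              exact hqz q _ hDest
            rw [← MeasureTheory.integral_zero (EuclideanSpace ℝ (Fin d)) ℝ (μ := νn n u)]
            exact integral_congr_ae hzero
        -- sequence values along νn
        have hseqval : ∀ c : ℝ, ∀ n, n₀ ≤ n → (∫ u in (0:ℝ)..1,
            ψq q u * ((∫ w, hq q w ∂(νn n u)) + c)) = c * ∫ u in (0:ℝ)..1, ψq q u := by
          intro c n hn
          have he : (fun u => ψq q u * ((∫ w, hq q w ∂(νn n u)) + c))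
              =ᵐ[volume.restrict (Set.Ioc (0:ℝ) 1)] (fun u => c * ψq q u) := by
            filter_upwards [hvanish n hn] with u hu
            rcases hu with h | h
            · rw [h]; ring
            · rw [h]; ring
          rw [intervalIntegral.integral_of_le h01, intervalIntegral.integral_of_le h01,
            integral_congr_ae he, MeasureTheory.integral_const_mul]
        -- narrow convergence for the shifted detectors
        have hcontc : ∀ c : ℝ, Continuous (fun p : (EuclideanSpace ℝ (Fin d)) × ℝ =>
            ψq q p.2 * (hq q p.1 + c)) := fun c =>
          ((hψqc q).comp continuous_snd).mul (((hqc q).comp continuous_fst).add continuous_const)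
        have hbdc : ∀ c : ℝ, ∀ p : (EuclideanSpace ℝ (Fin d)) × ℝ,
            |ψq q p.2 * (hq q p.1 + c)| ≤ 1 + |c| := by
          intro c p
          rw [abs_mul]
          have h1 : |ψq q p.2| ≤ 1 := by
            rw [abs_of_nonneg (hψq0 q p.2)]; exact hψq1 q p.2
          have h2 : |hq q p.1 + c| ≤ 1 + |c| := by
            apply le_trans (abs_add_le _ _)
            apply add_le_add _ (le_refl _)
            rw [abs_of_nonneg (hq0 q p.1)]; exact hqle1 q p.1
          calc |ψq q p.2| * |hq q p.1 + c| ≤ 1 * (1 + |c|) := by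
                apply mul_le_mul h1 h2 (abs_nonneg _) zero_le_one
            _ = 1 + |c| := one_mul _
        have hseqg : ∀ c : ℝ, Tendsto (fun n => ∫ u in (0:ℝ)..1,
            ψq q u * ((∫ w, hq q w ∂(νn n u)) + c)) atTop
            (𝓝 (∫ u in (0:ℝ)..1, ψq q u * ((∫ w, hq q w ∂(ν u)) + c))) := by
          intro c
          have hF := hnarrow (auxBCF _ (hcontc c) (1 + |c|) (hbdc c))
          have hinner2 : ∀ (μ : Measure (EuclideanSpace ℝ (Fin d)))
              (_ : IsProbabilityMeasure μ) (u : ℝ),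
              ∫ w, ψq q u * (hq q w + c) ∂μ = ψq q u * ((∫ w, hq q w ∂μ) + c) := by
            intro μ hμ u
            rw [MeasureTheory.integral_const_mul, aux_int_shift μ (hqint μ inferInstance) c]
          have heq1 : ∀ n, (∫ u in (0:ℝ)..1, ∫ w,
                (auxBCF _ (hcontc c) (1 + |c|) (hbdc c)) (w, u) ∂(νn n u))
              = ∫ u in (0:ℝ)..1, ψq q u * ((∫ w, hq q w ∂(νn n u)) + c) := by
            intro n
            apply intervalIntegral.integral_congr
            intro u _
            simp only [auxBCF_apply]
            exact hinner2 (νn n u) inferInstance u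
          have heq2 : (∫ u in (0:ℝ)..1, ∫ w,
                (auxBCF _ (hcontc c) (1 + |c|) (hbdc c)) (w, u) ∂(ν u))
              = ∫ u in (0:ℝ)..1, ψq q u * ((∫ w, hq q w ∂(ν u)) + c) := by
            apply intervalIntegral.integral_congr
            intro u _
            simp only [auxBCF_apply]
            exact hinner2 (ν u) inferInstance u
          rw [← heq2]
          exact hF.congr heq1
        have hψqII : IntervalIntegrable (ψq q) volume 0 1 := (hψqc q).intervalIntegrable 0 1
        have hPq : 0 < ∫ u in (0:ℝ)..1, ψq q u := by
          rw [intervalIntegral.integral_of_le h01]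
          apply aux_pos_integral (hψqc q) (hψq0 q) ⟨hql, hqr⟩ _ ((hψqc q).integrableOn_Ioc)
          show 0 < ψq q (q:ℝ)
          simp only [hψq, sub_self, abs_zero, mul_zero, sub_zero]
          exact lt_of_lt_of_le one_pos (le_max_right _ _)
        have hlim : ∀ c : ℝ, (∫ u in (0:ℝ)..1, ψq q u * ((∫ w, hq q w ∂(ν u)) + c))
            = c * ∫ u in (0:ℝ)..1, ψq q u := by
          intro c
          refine tendsto_nhds_unique (hseqg c) ?_
          apply Tendsto.congr' _ tendsto_const_nhds
          filter_upwards [eventually_ge_atTop n₀] with n hn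
          exact (hseqval c n hn).symm
        have hGII : IntervalIntegrable (fun u => ψq q u * (∫ w, hq q w ∂(ν u))) volume 0 1 := by
          by_contra hni
          have h2 : ¬ IntervalIntegrable
              (fun u => ψq q u * ((∫ w, hq q w ∂(ν u)) + 1)) volume 0 1 := by
            intro hsum
            apply hni
            have h3 := hsum.sub hψqII
            have heq : (fun u => ψq q u * ((∫ w, hq q w ∂(ν u)) + 1) - ψq q u)
                = fun u => ψq q u * (∫ w, hq q w ∂(ν u)) := by
              funext u; ring
            rwa [heq] at h3
          have h4 := hlim 1
          rw [intervalIntegral.integral_undef h2, one_mul] at h4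
          linarith
        have hG0 : (∫ u in (0:ℝ)..1, ψq q u * (∫ w, hq q w ∂(ν u))) = 0 := by
          have h5 := hlim 0
          simp only [add_zero, zero_mul] at h5
          exact h5
        have hIntOn : IntegrableOn (fun u => ψq q u * (∫ w, hq q w ∂(ν u)))
            (Set.Ioc 0 1) volume := (intervalIntegrable_iff_integrableOn_Ioc_of_le h01).1 hGII
        have hnn : 0 ≤ᵐ[volume.restrict (Set.Ioc (0:ℝ) 1)]
            (fun u => ψq q u * (∫ w, hq q w ∂(ν u))) :=
          Filter.Eventually.of_forall (fun u =>
            mul_nonneg (hψq0 q u) (integral_nonneg (hq0 q)))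
        have hz : (∫ u in Set.Ioc (0:ℝ) 1, ψq q u * (∫ w, hq q w ∂(ν u))) = 0 := by
          rw [← intervalIntegral.integral_of_le h01]
          exact hG0
        have h6 := (MeasureTheory.integral_eq_zero_iff_of_nonneg_ae hnn hIntOn).1 hz
        filter_upwards [h6] with u hu using hu
      -- combine over rationals
      have hall : ∀ᵐ u ∂(volume.restrict (Set.Ioc (0:ℝ) 1)), ∀ q : ℚ,
          0 < (q:ℝ) → (q:ℝ) < 1 → ψq q u * (∫ w, hq q w ∂(ν u)) = 0 := by
        rw [MeasureTheory.ae_all_iff]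
        intro q
        by_cases h1 : 0 < (q:ℝ) ∧ (q:ℝ) < 1
        · filter_upwards [hdetect q h1.1 h1.2] with u hu
          exact fun _ _ => hu
        · filter_upwards with u hql hqr
          exact absurd ⟨hql, hqr⟩ h1
      filter_upwards [hall, ae_restrict_mem measurableSet_Ioc] with u hu huIoc
      have huIcc : u ∈ Set.Icc (0:ℝ) 1 := ⟨huIoc.1.le, huIoc.2⟩
      obtain ⟨q, hqb1, hqb2⟩ : ∃ q : ℚ, max 0 (u - δw/4) < (q:ℝ) ∧ (q:ℝ) < u :=
        exists_rat_btwn (max_lt huIoc.1 (by linarith))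
      have hql : 0 < (q:ℝ) := lt_of_le_of_lt (le_max_left _ _) hqb1
      have hqr : (q:ℝ) < 1 := lt_of_lt_of_le hqb2 huIoc.2
      have huq : |u - (q:ℝ)| < δw/2 := by
        rw [abs_of_pos (by linarith)]
        have h2 := le_max_right 0 (u - δw/4)
        have h3 : u - δw/4 < (q:ℝ) := lt_of_le_of_lt h2 hqb1
        linarith
      have hψpos : ψq q u ≠ 0 := by
        have h1 : (2/δw) * |u - (q:ℝ)| < (2/δw) * (δw/2) := by
          apply mul_lt_mul_of_pos_left huq (by positivity)
        have h2 : (2/δw) * (δw/2) = 1 := by field_simp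
        have h3 : 0 < 1 - (2/δw) * |u - (q:ℝ)| := by linarith
        simp only [hψq]
        exact ne_of_gt (lt_of_lt_of_le h3 (le_max_right _ _))
      have hG : (∫ w, hq q w ∂(ν u)) = 0 := by
        rcases mul_eq_zero.1 (hu q hql hqr) with h | h
        · exact absurd h hψpos
        · exact h
      have hnull := aux_zero_ae (ν u) (hqc q) (hq0 q) (hqle1 q) hG
      apply measure_mono_null _ hnull
      rintro w ⟨hwK, hwD⟩
      simp only [Set.mem_setOf_eq]
      intro hzero
      have hDq : Metric.infDist w (R (σc (q:ℝ))) ≤ K'*ε := hqz' q w hzero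
      obtain ⟨p, hpR, hpd⟩ := (hRclosed (σc (q:ℝ))).exists_infDist_eq_dist (hRne _) w
      have hdp : dist w p ≤ K'*ε := by rw [← hpd]; exact hDq
      obtain ⟨k, sr, hsr, hpeq⟩ := hpR
      have hsnorm : ‖p‖ = sr := by
        rw [hpeq, norm_smul, hv_unit, Real.norm_eq_abs, abs_of_nonneg hsr, mul_one]
      have hsS : sr ≤ 2*K' := by
        have h1 : ‖p‖ ≤ ‖w‖ + dist w p := by
          rw [dist_eq_norm]
          nth_rewrite 1 [← sub_sub_cancel w p]
          exact norm_sub_le _ _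
        have h2 : K'*ε ≤ K' := by nlinarith
        rw [hsnorm] at h1
        linarith
      have hvq : dist (v k (σc (q:ℝ))) (v k (σ u)) < ε := by
        apply hUCε k _ (hQmemc (q:ℝ)) _ (hQmem u huIcc)
        rw [← hσceq u huIcc]
        calc dist (σc (q:ℝ)) (σc u) ≤ K * dist (q:ℝ) u := hσclip _ _
          _ ≤ K * (δw/2) := by
              apply mul_le_mul_of_nonneg_left _ hK.le
              rw [Real.dist_eq, abs_sub_comm]
              exact huq.le
          _ ≤ η/2 := hKδw
          _ < η := by linarith
      have hfinal : Metric.infDist w (R (σ u)) ≤ (3*K'+2)*ε := by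
        calc Metric.infDist w (R (σ u)) ≤ dist w (sr • v k (σ u)) :=
              Metric.infDist_le_dist_of_mem (hRmem _ k sr hsr)
          _ ≤ dist w p + dist p (sr • v k (σ u)) := dist_triangle _ _ _
          _ = dist w p + sr * dist (v k (σc (q:ℝ))) (v k (σ u)) := by
              rw [hpeq, dist_smul₀, Real.norm_eq_abs, abs_of_nonneg hsr]
          _ ≤ K'*ε + (2*K') * ε := by
              apply add_le_add hdp
              apply mul_le_mul hsS hvq.le dist_nonneg (by linarith)
          _ ≤ (3*K'+2)*ε := by nlinarith
      linarith
    -- conclude: intersect over ε = 1/(j+1)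
    have hjj : ∀ j : ℕ, ∀ᵐ u ∂(volume.restrict (Set.Icc (0:ℝ) 1)),
        ν u {w | ‖w‖ ≤ K' ∧ (3*K' + 2)*(1/((j:ℝ)+1)) < Metric.infDist w (R (σ u))} = 0 := by
      intro j
      apply aux_Ioc_to_Icc
      apply hP2 (1/((j:ℝ)+1)) (by positivity)
      rw [div_le_one (by positivity)]
      linarith [Nat.cast_nonneg (α := ℝ) j]
    filter_upwards [MeasureTheory.ae_all_iff.2 hjj, aux_Ioc_to_Icc hballν] with u hu hbu
    show ν u (R (σ u))ᶜ = 0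
    have hsub : (R (σ u))ᶜ ⊆ (Metric.closedBall (0:EuclideanSpace ℝ (Fin d)) K')ᶜ ∪
        ⋃ j : ℕ, {w | ‖w‖ ≤ K' ∧ (3*K' + 2)*(1/((j:ℝ)+1)) < Metric.infDist w (R (σ u))} := by
      intro w hw
      rcases le_or_gt ‖w‖ K' with hK2 | hK2
      · right
        have hpos : 0 < Metric.infDist w (R (σ u)) :=
          ((hRclosed (σ u)).notMem_iff_infDist_pos (hRne _)).1 hw
        obtain ⟨j, hj⟩ := exists_nat_one_div_lt
          (show 0 < Metric.infDist w (R (σ u)) / (3*K'+2) from by positivity)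
        refine Set.mem_iUnion.2 ⟨j, hK2, ?_⟩
        have h2 := (lt_div_iff₀ (show 0 < 3*K'+2 by linarith)).1 hj
        linarith [h2]
      · left
        simp only [Set.mem_compl_iff, Metric.mem_closedBall, dist_zero_right, not_le]
        exact hK2
    apply measure_mono_null hsub
    apply measure_union_null hbu
    rw [measure_iUnion_null_iff]
    exact fun j => hu j
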